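/- arXiv:math/0506274 — 5 statements merged into one kernel-verified Lean document; each statement's English description precedes it below -/
import Mathlib

section
/- For a=1, b=0 and positive integer l: ∑_{m≥0} ∑_{k≥0} h_{m-2k}({1}^{k+1},{q}^{k}) (q^l/[l]²)^k z^m = ([l]²/[2l]) ( 1/([l]-[l+1]z) + q^l/([l]-q[l-1]z) ) as formal power series in z over ℚ(q). -/
/-- `hh q r s n` is the complete homogeneous symmetric function `h_n({1}^r, {q}^s)`. -/
noncomputable def hh {K : Type*} [CommSemiring K] (q : K) (r s : ℕ) (n : ℕ) : K :=
  PowerSeries.coeff n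
    ((PowerSeries.mk fun _ => (1 : K)) ^ r * (PowerSeries.mk fun k => q ^ k) ^ s)

/-- The q-integer `[n] = (1-q^n)/(1-q)`. -/
noncomputable def qint {K : Type*} [Field K] (q : K) (n : ℕ) : K := (1 - q ^ n) / (1 - q)


open PowerSeries Finset

lemma lemA {K : Type*} [Field K] (q c : K) :
    (PowerSeries.mk fun m => ∑ k ∈ Finset.range (m / 2 + 1),
        c ^ k * hh q (k + 1) k (m - 2 * k)) =
      (PowerSeries.mk fun _ => (1 : K)) *
        (1 - C c * X ^ 2 * (PowerSeries.mk fun _ => (1 : K)) *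
          (PowerSeries.mk fun k => q ^ k))⁻¹ := by
  set U : K⟦X⟧ := PowerSeries.mk fun _ => (1 : K) with hU
  set V : K⟦X⟧ := PowerSeries.mk fun k => q ^ k with hV
  set W : K⟦X⟧ := C c * X ^ 2 * U * V with hWdef
  have hW0 : constantCoeff (1 - W) ≠ 0 := by
    simp [hWdef, hU, hV]
  have hXW : ∀ j : ℕ, (X : K⟦X⟧) ^ (2 * j) ∣ W ^ j := by
    intro j
    refine ⟨(C c) ^ j * U ^ j * V ^ j, ?_⟩
    rw [hWdef, pow_mul]
    ring
  ext m
  rw [coeff_mk]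
  have hiw : (1 - W) * (1 - W)⁻¹ = 1 := PowerSeries.mul_inv_cancel _ hW0
  have hg := geom_sum_mul W (m + 1)
  have hgeom : U * (1 - W)⁻¹ =
      U * (∑ k ∈ range (m + 1), W ^ k) + (U * (1 - W)⁻¹) * W ^ (m + 1) := by
    linear_combination (U * ∑ k ∈ range (m + 1), W ^ k) * hiw + (U * (1 - W)⁻¹) * hg
  have hhi : coeff m ((U * (1 - W)⁻¹) * W ^ (m + 1)) = 0 := by
    have hdvd : (X : K⟦X⟧) ^ (m + 1) ∣ (U * (1 - W)⁻¹) * W ^ (m + 1) :=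
      dvd_mul_of_dvd_right ((pow_dvd_pow X (by omega : m + 1 ≤ 2 * (m + 1))).trans
        (hXW (m + 1))) _
    exact X_pow_dvd_iff.mp hdvd m (lt_add_one m)
  rw [hgeom, map_add, hhi, add_zero, Finset.mul_sum, map_sum]
  have hterm : ∀ k, coeff m (U * W ^ k) =
      if 2 * k ≤ m then c ^ k * hh q (k + 1) k (m - 2 * k) else 0 := by
    intro k
    have hrw : U * W ^ k = C (c ^ k) * (X ^ (2 * k) * (U ^ (k + 1) * V ^ k)) := by
      rw [hWdef, map_pow, pow_mul]
      ring
    rw [hrw, coeff_C_mul, coeff_X_pow_mul']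
    split_ifs with h
    · simp [hh, hU, hV]
    · exact mul_zero _
  simp only [hterm]
  refine (Finset.sum_congr rfl ?_).trans
    (Finset.sum_subset (Finset.range_subset_range.2 (by omega : m / 2 + 1 ≤ m + 1)) ?_)
  · intro k hk
    rw [if_pos]
    have : k ≤ m / 2 := Nat.lt_succ_iff.mp (Finset.mem_range.mp hk)
    omega
  · intro k hk hnk
    rw [if_neg]
    have : m / 2 + 1 ≤ k := by simpa using hnk
    omega

lemma oneSubX_mul_U {K : Type*} [Field K] :
    ((1 : K⟦X⟧) - X) * (PowerSeries.mk fun _ => (1 : K)) = 1 := by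
  ext n
  cases n with
  | zero => simp
  | succ n => simp [sub_mul, coeff_succ_X_mul, coeff_mk, coeff_one]

lemma oneSubqX_mul_V {K : Type*} [Field K] (q : K) :
    ((1 : K⟦X⟧) - C q * X) * (PowerSeries.mk fun k => q ^ k) = 1 := by
  ext n
  cases n with
  | zero => simp
  | succ n =>
    simp [sub_mul, mul_assoc, coeff_succ_X_mul, coeff_mk, coeff_one, coeff_C_mul, pow_succ]
    ring

/-- Lemma, case a = 1, b = 0:
`∑_{m≥0} ∑_{k≥0} h_{m-2k}({1}^{k+1},{q}^{k}) (q^l/[l]²)^k z^m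
  = ([l]²/[2l]) ( 1/([l]-[l+1]z) + q^l/([l]-q[l-1]z) )`
as formal power series in `z`. -/
theorem hh_sum_case_a1_b0 {K : Type*} [Field K] (q : K) (hq : q ≠ 1) (l : ℕ) (hl : 1 ≤ l)
    (hql : qint q l ≠ 0) (hq2l : qint q (2 * l) ≠ 0) :
    (PowerSeries.mk fun m =>
        ∑ k ∈ Finset.range (m / 2 + 1),
          (q ^ l / (qint q l) ^ 2) ^ k * hh q (k + 1) k (m - 2 * k)) =
      PowerSeries.C ((qint q l) ^ 2 / qint q (2 * l)) *
        ((PowerSeries.C (qint q l) - PowerSeries.C (qint q (l + 1)) * PowerSeries.X)⁻¹ +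
          PowerSeries.C (q ^ l) *
            (PowerSeries.C (qint q l) -
              PowerSeries.C (q * qint q (l - 1)) * PowerSeries.X)⁻¹) := by
  obtain ⟨n, rfl⟩ : ∃ n, l = n + 1 := ⟨l - 1, (Nat.succ_pred_eq_of_pos hl).symm⟩
  have hq1 : (1 : K) - q ≠ 0 := sub_ne_zero.2 (Ne.symm hq)
  set L : K := qint q (n + 1) with hL
  set c : K := q ^ (n + 1) / L ^ 2 with hc
  -- scalar identities
  have e1 : L * qint q (n + 1 + 1) + q * qint q (n + 1 - 1) * L = (1 + q) * L ^ 2 := by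
    simp only [hL, qint, Nat.add_sub_cancel]
    field_simp
    ring
  have e2 : qint q (n + 1 + 1) * (q * qint q (n + 1 - 1)) = q * L ^ 2 - q ^ (n + 1) := by
    simp only [hL, qint, Nat.add_sub_cancel]
    field_simp
    ring
  have e3 : L ^ 2 * c = q ^ (n + 1) := by
    rw [hc]
    field_simp
  have e4 : L * (1 + q ^ (n + 1)) = qint q (2 * (n + 1)) := by
    simp only [hL, qint]
    field_simp
    ring
  have e5 : q * qint q (n + 1 - 1) + q ^ (n + 1) * qint q (n + 1 + 1) =
      q * qint q (2 * (n + 1)) := by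
    simp only [qint, Nat.add_sub_cancel]
    field_simp
    ring
  -- power series setup
  set U : K⟦X⟧ := PowerSeries.mk fun _ => (1 : K) with hU
  set V : K⟦X⟧ := PowerSeries.mk fun k => q ^ k with hVdef
  set W : K⟦X⟧ := C c * X ^ 2 * U * V with hWdef
  set P : K⟦X⟧ := (1 - X) * (1 - C q * X) - C c * X ^ 2 with hPdef
  set D1 : K⟦X⟧ := C L - C (qint q (n + 1 + 1)) * X with hD1
  set D2 : K⟦X⟧ := C L - C (q * qint q (n + 1 - 1)) * X with hD2
  have hXU : ((1 : K⟦X⟧) - X) * U = 1 := oneSubX_mul_U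
  have hXV : ((1 : K⟦X⟧) - C q * X) * V = 1 := oneSubqX_mul_V q
  have hW0 : constantCoeff (1 - W) ≠ 0 := by simp [hWdef]
  have hiw : (1 - W) * (1 - W)⁻¹ = 1 := PowerSeries.mul_inv_cancel _ hW0
  have hUP : U * P = (1 - W) * (1 - C q * X) := by
    rw [hPdef, hWdef]
    linear_combination (1 - C q * X) * hXU + (C c * X ^ 2 * U) * hXV
  have hLP : (PowerSeries.mk fun m =>
      ∑ k ∈ Finset.range (m / 2 + 1),
        c ^ k * hh q (k + 1) k (m - 2 * k)) * P = 1 - C q * X := by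
    rw [lemA q c]
    linear_combination (1 - W)⁻¹ * hUP + (1 - C q * X) * hiw
  -- D1 * D2 = C L^2 * P
  have E1 := congrArg (C : K →+* K⟦X⟧) e1
  have E2 := congrArg (C : K →+* K⟦X⟧) e2
  have E3 := congrArg (C : K →+* K⟦X⟧) e3
  have E4 := congrArg (C : K →+* K⟦X⟧) e4
  have E5 := congrArg (C : K →+* K⟦X⟧) e5
  simp only [map_add, map_mul, map_sub, map_pow, map_one] at E1 E2 E3 E4 E5
  have hD : D1 * D2 = C (L ^ 2) * P := by
    rw [hD1, hD2, hPdef]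
    simp only [map_mul, map_pow]
    linear_combination (-X) * E1 + X ^ 2 * E2 + X ^ 2 * E3
  -- invertibility
  have hd1 : constantCoeff D1 ≠ 0 := by simpa [hD1] using hql
  have hd2 : constantCoeff D2 ≠ 0 := by simpa [hD2] using hql
  have hi1 : D1⁻¹ * D1 = 1 := PowerSeries.inv_mul_cancel _ hd1
  have hi2 : D2⁻¹ * D2 = 1 := PowerSeries.inv_mul_cancel _ hd2
  have hD12 : D1 * D2 ≠ 0 :=
    mul_ne_zero (fun h => hd1 (by simp [h])) (fun h => hd2 (by simp [h]))
  -- conclude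
  apply mul_right_cancel₀ hD12
  have hr : L ^ 2 / qint q (2 * (n + 1)) * qint q (2 * (n + 1)) = L ^ 2 := by
    field_simp
  have Er := congrArg (C : K →+* K⟦X⟧) hr
  simp only [map_mul, map_pow] at Er
  calc (PowerSeries.mk fun m =>
        ∑ k ∈ Finset.range (m / 2 + 1),
          c ^ k * hh q (k + 1) k (m - 2 * k)) * (D1 * D2)
      = ((PowerSeries.mk fun m =>
        ∑ k ∈ Finset.range (m / 2 + 1),
          c ^ k * hh q (k + 1) k (m - 2 * k)) * P) * C (L ^ 2) := by
        rw [hD]; ring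
    _ = (1 - C q * X) * C (L ^ 2) := by rw [hLP]
    _ = C (L ^ 2 / qint q (2 * (n + 1))) *
        (D1⁻¹ + C (q ^ (n + 1)) * D2⁻¹) * (D1 * D2) := by
        have expand : C (L ^ 2 / qint q (2 * (n + 1))) *
            (D1⁻¹ + C (q ^ (n + 1)) * D2⁻¹) * (D1 * D2) =
            C (L ^ 2 / qint q (2 * (n + 1))) *
              (D2 + C (q ^ (n + 1)) * D1) := by
          linear_combination (C (L ^ 2 / qint q (2 * (n + 1))) * D2) * hi1 +
            (C (L ^ 2 / qint q (2 * (n + 1))) * C (q ^ (n + 1)) * D1) * hi2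
        rw [expand, hD1, hD2]
        simp only [map_mul, map_pow]
        linear_combination (-(1 - C q * X)) * Er -
          C (L ^ 2 / qint q (2 * (n + 1))) * E4 +
          (X * C (L ^ 2 / qint q (2 * (n + 1)))) * E5
end

section
/- Let X_l = [l][l+1]/q^l where [n] = (1-q^n)/(1-q). Then for all integers m ≥ 0 and l ≥ 1, X_l^{m+1} - X_{l-1}^{m+1} = ∑_{k≥0} h_{m-2k}({1}^{k+1},{q}^{k+1}) [2l] [l]^{2(m-k)} q^{-l(m-k+1)}. -/
/-- `X_l = [l][l+1]/q^l`. -/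
noncomputable def Xl {K : Type*} [Field K] (q : K) (l : ℕ) : K :=
  qint q l * qint q (l + 1) / q ^ l

open PowerSeries Finset

section Aux
variable {K : Type*} [Field K]


lemma oneSubX_mul_mkOne : ((1 - X) * PowerSeries.mk (fun _ => (1:K))) = 1 := by
  ext n
  rw [sub_mul, one_mul, map_sub]
  cases n with
  | zero => simp
  | succ n => simp [coeff_succ_X_mul, coeff_one]

lemma oneSubqX_mul_mkq (q : K) : ((1 - C q * X) * PowerSeries.mk (fun k => q ^ k)) = 1 := by
  ext n
  rw [sub_mul, one_mul, map_sub, mul_assoc, coeff_C_mul]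
  cases n with
  | zero => simp
  | succ n => simp [coeff_succ_X_mul, coeff_one, pow_succ, mul_comm]

lemma psKey (q : K) (r : ℕ) :
    (1 - X) * (1 - C q * X) *
      ((PowerSeries.mk fun _ => (1:K)) ^ (r+1) * (PowerSeries.mk fun k => q ^ k) ^ (r+1)) =
    (PowerSeries.mk fun _ => (1:K)) ^ r * (PowerSeries.mk fun k => q ^ k) ^ r := by
  have h1 := oneSubX_mul_mkOne (K := K)
  have h2 := oneSubqX_mul_mkq q
  calc (1 - X) * (1 - C q * X) *
      ((PowerSeries.mk fun _ => (1:K)) ^ (r+1) * (PowerSeries.mk fun k => q ^ k) ^ (r+1))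
      = ((1 - X) * PowerSeries.mk (fun _ => (1:K))) *
        (((1 - C q * X) * PowerSeries.mk (fun k => q ^ k)) *
          ((PowerSeries.mk fun _ => (1:K)) ^ r * (PowerSeries.mk fun k => q ^ k) ^ r)) := by
        rw [pow_succ, pow_succ]; ring
    _ = _ := by rw [h1, h2, one_mul, one_mul]

lemma hh_zero (q : K) (r s : ℕ) : hh q r s 0 = 1 := by
  simp [hh, coeff_zero_eq_constantCoeff, map_mul, map_pow]

lemma hh_zz (q : K) (n : ℕ) : hh q 0 0 n = if n = 0 then 1 else 0 := by
  simp [hh, coeff_one]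

lemma hh_rec (q : K) (r n : ℕ) :
    hh q (r+1) (r+1) (n+2) =
      (1+q) * hh q (r+1) (r+1) (n+1) - q * hh q (r+1) (r+1) n + hh q r r (n+2) := by
  have h := psKey q r
  set G := (PowerSeries.mk fun _ => (1:K)) ^ (r+1) * (PowerSeries.mk fun k => q ^ k) ^ (r+1) with hG
  have expand : (1 - X) * (1 - C q * X) * G
      = G - X * G - C q * (X * G) + C q * (X * (X * G)) := by ring
  have h2 : G - X * G - C q * (X * G) + C q * (X * (X * G))
      = (PowerSeries.mk fun _ => (1:K)) ^ r * (PowerSeries.mk fun k => q ^ k) ^ r := by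
    rw [← expand, h]
  have := congrArg (PowerSeries.coeff (n+2)) h2
  simp only [map_add, map_sub, coeff_C_mul, coeff_succ_X_mul] at this
  have : hh q (r+1) (r+1) (n+2) - hh q (r+1) (r+1) (n+1) - q * hh q (r+1) (r+1) (n+1)
      + q * hh q (r+1) (r+1) n = hh q r r (n+2) := this
  linear_combination this

lemma hh_one (q : K) (r : ℕ) :
    hh q (r+1) (r+1) 1 = (1+q) + hh q r r 1 := by
  have h := psKey q r
  set G := (PowerSeries.mk fun _ => (1:K)) ^ (r+1) * (PowerSeries.mk fun k => q ^ k) ^ (r+1) with hG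
  have expand : (1 - X) * (1 - C q * X) * G
      = G - X * G - C q * (X * G) + C q * (X * (X * G)) := by ring
  have h2 : G - X * G - C q * (X * G) + C q * (X * (X * G))
      = (PowerSeries.mk fun _ => (1:K)) ^ r * (PowerSeries.mk fun k => q ^ k) ^ r := by
    rw [← expand, h]
  have h3 := congrArg (PowerSeries.coeff 1) h2
  have e1 : PowerSeries.coeff 1 (X * G) = hh q (r+1) (r+1) 0 := coeff_succ_X_mul 0 G
  have e2 : PowerSeries.coeff 1 (X * (X * G)) = PowerSeries.coeff 0 (X * G) :=
    coeff_succ_X_mul 0 _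
  simp only [map_add, map_sub, coeff_C_mul, e1, e2, coeff_zero_X_mul, mul_zero, add_zero] at h3
  have h0 : hh q (r+1) (r+1) 0 = 1 := hh_zero q _ _
  rw [h0] at h3
  have : hh q (r+1) (r+1) 1 - 1 - q * 1 = hh q r r 1 := h3
  linear_combination this
noncomputable def Hz (q : K) (k : ℕ) (n : ℤ) : K :=
  if 0 ≤ n then hh q k k n.toNat else 0

lemma Hz_neg (q : K) (k : ℕ) {n : ℤ} (h : n < 0) : Hz q k n = 0 := by
  simp [Hz, not_le.mpr h]

lemma Hz_natCast (q : K) (k : ℕ) (n : ℕ) : Hz q k (n : ℤ) = hh q k k n := by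
  simp [Hz]

lemma Hz_rec (q : K) (k : ℕ) (n : ℤ) :
    Hz q (k+1) n = (1+q) * Hz q (k+1) (n-1) - q * Hz q (k+1) (n-2) + Hz q k n := by
  rcases lt_or_ge n 0 with h | h
  · rw [Hz_neg q _ h, Hz_neg q _ (by omega), Hz_neg q _ (by omega), Hz_neg q _ h]; ring
  · obtain ⟨N, rfl⟩ : ∃ N : ℕ, n = (N : ℤ) := ⟨n.toNat, by omega⟩
    match N with
    | 0 =>
      rw [Hz_natCast, Hz_natCast, Hz_neg q _ (by norm_num), Hz_neg q _ (by norm_num)]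
      rw [hh_zero, hh_zero]; ring
    | 1 =>
      have e1 : ((1:ℕ) : ℤ) - 1 = ((0:ℕ) : ℤ) := by norm_num
      rw [Hz_natCast, Hz_natCast, e1, Hz_natCast, Hz_neg q _ (by norm_num)]
      rw [hh_one, hh_zero]; ring
    | (N+2) =>
      have e1 : ((N+2:ℕ) : ℤ) - 1 = ((N+1:ℕ) : ℤ) := by push_cast; ring
      have e2 : ((N+2:ℕ) : ℤ) - 2 = ((N:ℕ) : ℤ) := by push_cast; ring
      rw [Hz_natCast, Hz_natCast, e1, Hz_natCast, e2, Hz_natCast]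
      exact hh_rec q k N

noncomputable def Tz (q y : K) (m : ℕ) : K :=
  ∑ k ∈ Finset.range (m+1), Hz q (k+1) ((m : ℤ) - 2*k) * y^(m-k)

lemma Tz_zero (q y : K) : Tz q y 0 = 1 := by
  have h : Hz q 1 (0:ℤ) = 1 := by rw [← Nat.cast_zero, Hz_natCast, hh_zero]
  simp [Tz, h]

lemma Tz_one (q y : K) : Tz q y 1 = (1+q) * y := by
  rw [Tz, Finset.sum_range_succ, Finset.sum_range_one]
  have h1 : Hz q 1 (1:ℤ) = (1+q) := by
    norm_num [Hz, hh_one q 0, hh_zz]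
  have h2 : Hz q 2 (-1:ℤ) = 0 := Hz_neg q _ (by norm_num)
  push_cast
  rw [h1, h2]
  simp

lemma Tz_rec (q y : K) (m : ℕ) :
    Tz q y (m+2) = (1+q) * y * Tz q y (m+1) - q * y^2 * Tz q y m + y * Tz q y m := by
  have step : ∀ k ∈ Finset.range (m+3),
      Hz q (k+1) ((m+2 : ℤ) - 2*k) * y^(m+2-k)
      = (1+q) * (Hz q (k+1) ((m+1 : ℤ) - 2*k) * y^(m+2-k))
        - q * (Hz q (k+1) ((m : ℤ) - 2*k) * y^(m+2-k))
        + Hz q k ((m+2 : ℤ) - 2*k) * y^(m+2-k) := by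
    intro k _
    have := Hz_rec q k ((m+2 : ℤ) - 2*k)
    have e1 : (m+2 : ℤ) - 2*k - 1 = (m+1 : ℤ) - 2*k := by ring
    have e2 : (m+2 : ℤ) - 2*k - 2 = (m : ℤ) - 2*k := by ring
    rw [e1, e2] at this
    rw [this]; ring
  have hT : Tz q y (m+2) = ∑ k ∈ Finset.range (m+3),
      Hz q (k+1) ((m+2 : ℤ) - 2*k) * y^(m+2-k) := by
    rw [Tz]; push_cast; norm_num
  rw [hT, Finset.sum_congr rfl step]
  rw [Finset.sum_add_distrib, Finset.sum_sub_distrib]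
  -- Sum 1
  have S1 : ∑ k ∈ Finset.range (m+3), (1+q) * (Hz q (k+1) ((m+1 : ℤ) - 2*k) * y^(m+2-k))
      = (1+q) * y * Tz q y (m+1) := by
    rw [Finset.sum_range_succ]
    push_cast
    have hz : Hz q (m+2+1) ((m:ℤ)+1 - 2*((m:ℤ)+2)) = 0 := Hz_neg _ _ (by omega)
    rw [hz]
    rw [Tz, Finset.mul_sum]
    simp only [mul_zero, zero_mul, add_zero]
    apply Finset.sum_congr rfl
    intro k hk
    simp only [Finset.mem_range] at hk
    have he : m + 2 - k = (m + 1 - k) + 1 := by omega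
    rw [he, pow_succ]
    push_cast
    ring
  -- Sum 2
  have S2 : ∑ k ∈ Finset.range (m+3), q * (Hz q (k+1) ((m : ℤ) - 2*k) * y^(m+2-k))
      = q * y^2 * Tz q y m := by
    rw [Finset.sum_range_succ, Finset.sum_range_succ]
    push_cast
    have hz1 : Hz q (m+2+1) ((m : ℤ) - 2*((m:ℤ)+2)) = 0 := Hz_neg _ _ (by omega)
    have hz2 : Hz q (m+1+1) ((m : ℤ) - 2*((m:ℤ)+1)) = 0 := Hz_neg _ _ (by omega)
    rw [hz1, hz2]
    rw [Tz, Finset.mul_sum]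
    simp only [mul_zero, zero_mul, add_zero]
    apply Finset.sum_congr rfl
    intro k hk
    simp only [Finset.mem_range] at hk
    have he : m + 2 - k = (m - k) + 2 := by omega
    rw [he, pow_add]
    ring
  -- Sum 3
  have S3 : ∑ k ∈ Finset.range (m+3), Hz q k ((m+2 : ℤ) - 2*k) * y^(m+2-k)
      = y * Tz q y m := by
    rw [Finset.sum_range_succ']
    have hz0 : Hz q 0 ((m+2 : ℤ) - 2*(0:ℕ)) = 0 := by
      have : ((m+2 : ℤ) - 2*(0:ℕ)) = ((m+2 : ℕ) : ℤ) := by push_cast; ring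
      rw [this, Hz_natCast, hh_zz]
      simp
    rw [hz0, zero_mul, add_zero]
    rw [Finset.sum_range_succ]
    push_cast
    have hz1 : Hz q (m+1+1) ((m:ℤ)+2 - 2*((m:ℤ)+1+1)) = 0 := Hz_neg _ _ (by omega)
    rw [hz1, zero_mul, add_zero]
    rw [Tz, Finset.mul_sum]
    apply Finset.sum_congr rfl
    intro k hk
    simp only [Finset.mem_range] at hk
    have e : (m+2 : ℤ) - 2*((k:ℤ)+1) = (m : ℤ) - 2*k := by ring
    have e2 : m + 1 - k = (m - k) + 1 := by omega
    rw [e, e2, pow_succ]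
    ring
  rw [S1, S2, S3]

lemma geom_key (q y a b : K) (hs : a + b = (1+q) * y) (hp : a * b = q * y^2 - y) :
    ∀ m : ℕ, a^(m+1) - b^(m+1) = (a - b) * Tz q y m := by
  have main : ∀ m : ℕ, (a^(m+1) - b^(m+1) = (a - b) * Tz q y m) ∧
      (a^(m+2) - b^(m+2) = (a - b) * Tz q y (m+1)) := by
    intro m
    induction m with
    | zero =>
      constructor
      · rw [Tz_zero]; ring
      · rw [Tz_one]; linear_combination (a - b) * hs
    | succ n ih =>
      obtain ⟨ih1, ih2⟩ := ih
      refine ⟨ih2, ?_⟩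
      rw [Tz_rec]
      have key : a^(n+3) - b^(n+3) = (a+b) * (a^(n+2) - b^(n+2)) - (a*b) * (a^(n+1) - b^(n+1)) := by
        ring
      rw [key, hs, hp, ih1, ih2]
      ring
  exact fun m => (main m).1

lemma term_eq (H B A P : K) (hP : P ≠ 0) (t : ℕ) :
    B / P * (H * (A^2/P)^t) = H * B * A^(2*t) * (P^t * P)⁻¹ := by
  field_simp
  ring_nf
  rw [mul_assoc, ← mul_pow, mul_inv_cancel₀ hP, one_pow, mul_one]

end Aux

/-- for `m ≥ 0` and `l ≥ 1`,
`X_l^{m+1} - X_{l-1}^{m+1} = ∑_{k≥0} h_{m-2k}({1}^{k+1},{q}^{k+1}) [2l] [l]^{2(m-k)} q^{-l(m-k+1)}`;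
the sum is finite, over `0 ≤ k ≤ ⌊m/2⌋`. -/
theorem Xl_pow_sub {K : Type*} [Field K] (q : K) (hq0 : q ≠ 0) (hq1 : q ≠ 1)
    (m l : ℕ) (hl : 1 ≤ l) :
    Xl q l ^ (m + 1) - Xl q (l - 1) ^ (m + 1) =
      ∑ k ∈ Finset.range (m / 2 + 1),
        hh q (k + 1) (k + 1) (m - 2 * k) * qint q (2 * l) * qint q l ^ (2 * (m - k)) *
          (q ^ (l * (m - k + 1)))⁻¹ := by
  obtain ⟨n, rfl⟩ : ∃ n, l = n + 1 := ⟨l - 1, by omega⟩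
  have hq1' : (1:K) - q ≠ 0 := sub_ne_zero.mpr (Ne.symm hq1)
  have hpow : (q:K)^(n+1) ≠ 0 := pow_ne_zero _ hq0
  set y : K := qint q (n+1)^2 / q^(n+1) with hy
  have hsum : Xl q (n+1) + Xl q n = (1+q) * y := by
    rw [hy]; simp only [Xl, qint]; field_simp; ring
  have hprod : Xl q (n+1) * Xl q n = q * y^2 - y := by
    rw [hy]; simp only [Xl, qint]; field_simp; ring
  have hdiff : Xl q (n+1) - Xl q n = qint q (2*(n+1)) / q^(n+1) := by
    simp only [Xl, qint]; field_simp; ring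
  have hl1 : n + 1 - 1 = n := rfl
  rw [hl1, geom_key q y (Xl q (n+1)) (Xl q n) hsum hprod m, hdiff]
  have hTz : Tz q y m = ∑ k ∈ Finset.range (m/2+1),
      Hz q (k+1) ((m : ℤ) - 2*k) * y^(m-k) := by
    rw [Tz]
    refine (Finset.sum_subset ?_ ?_).symm
    · intro k hk
      simp only [Finset.mem_range] at hk ⊢
      omega
    · intro k _ hk
      simp only [Finset.mem_range] at hk
      rw [Hz_neg q _ (by omega), zero_mul]
  rw [hTz, Finset.mul_sum]
  apply Finset.sum_congr rfl
  intro k hk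
  simp only [Finset.mem_range] at hk
  have h2k : 2 * k ≤ m := by omega
  have e0 : (m : ℤ) - 2*k = ((m - 2*k : ℕ) : ℤ) := by omega
  rw [e0, Hz_natCast]
  have epow : q^((n+1) * (m - k + 1)) = (q^(n+1))^(m-k) * q^(n+1) := by
    rw [← pow_succ, ← pow_mul]
  rw [epow, hy]
  exact term_eq _ _ _ _ hpow _
end

section
/- Let X_l = [l][l+1]/q^l and define g_{k,m}(q) = h_{2m-k}({1}^{k-m+1},{q}^{k-m}) + h_{2m-k}({1}^{k-m},{q}^{k-m+1}). Then for all integers m ≥ 1 and l ≥ 1, X_l^m + X_{l-1}^m = ∑_{k≥0} g_{m,m-k}(q) [l]^{2(m-k)} q^{-l(m-k)}. -/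
/-- `h_n({1}^r,{q}^s)` with integer arguments, zero when `r < 0`, `s < 0` or `n < 0`. -/
noncomputable def hz {K : Type*} [CommSemiring K] (q : K) (r s n : ℤ) : K :=
  if 0 ≤ r ∧ 0 ≤ s ∧ 0 ≤ n then hh q r.toNat s.toNat n.toNat else 0

/-- `g_{k,m}(q) = h_{2m-k}({1}^{k-m+1},{q}^{k-m}) + h_{2m-k}({1}^{k-m},{q}^{k-m+1})`. -/
noncomputable def gdef {K : Type*} [CommSemiring K] (q : K) (k m : ℤ) : K :=
  hz q (k - m + 1) (k - m) (2 * m - k) + hz q (k - m) (k - m + 1) (2 * m - k)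

namespace XlPowAux

open PowerSeries

variable {K : Type*} [CommRing K] (q : K)

lemma f_inv : ((1 : K⟦X⟧) - X) * PowerSeries.mk (fun _ => (1:K)) = 1 := by
  ext n
  cases n with
  | zero => simp [coeff_zero_eq_constantCoeff]
  | succ n =>
    rw [sub_mul, one_mul, map_sub, coeff_succ_X_mul, coeff_mk, coeff_mk, coeff_one]
    simp

lemma g_inv : ((1 : K⟦X⟧) - C q * X) * PowerSeries.mk (fun k => q ^ k) = 1 := by
  ext n
  cases n with
  | zero => simp [coeff_zero_eq_constantCoeff]
  | succ n =>
    rw [sub_mul, one_mul, map_sub, mul_assoc, coeff_C_mul, coeff_succ_X_mul,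
      coeff_mk, coeff_mk, coeff_one]
    simp [pow_succ, mul_comm]

lemma L1 (r s n : ℕ) : hh q (r+1) s (n+1) = hh q r s (n+1) + hh q (r+1) s n := by
  have h : ((PowerSeries.mk fun _ => (1 : K)) ^ r * (PowerSeries.mk fun k => q ^ k) ^ s)
      = (1 - X) * ((PowerSeries.mk fun _ => (1 : K)) ^ (r+1) * (PowerSeries.mk fun k => q ^ k) ^ s) := by
    rw [pow_succ]
    calc (PowerSeries.mk fun _ => (1 : K)) ^ r * (PowerSeries.mk fun k => q ^ k) ^ s
        = ((1 - X) * PowerSeries.mk (fun _ => (1:K))) *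
          ((PowerSeries.mk fun _ => (1 : K)) ^ r * (PowerSeries.mk fun k => q ^ k) ^ s) := by
          rw [f_inv, one_mul]
      _ = _ := by ring
  unfold hh
  rw [h, sub_mul, one_mul, map_sub, coeff_succ_X_mul]
  ring

lemma L2 (r s n : ℕ) : hh q r (s+1) (n+1) = q * hh q r (s+1) n + hh q r s (n+1) := by
  have h : ((PowerSeries.mk fun _ => (1 : K)) ^ r * (PowerSeries.mk fun k => q ^ k) ^ s)
      = (1 - C q * X) * ((PowerSeries.mk fun _ => (1 : K)) ^ r * (PowerSeries.mk fun k => q ^ k) ^ (s+1)) := by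
    rw [pow_succ]
    calc (PowerSeries.mk fun _ => (1 : K)) ^ r * (PowerSeries.mk fun k => q ^ k) ^ s
        = ((1 - C q * X) * PowerSeries.mk (fun k => q ^ k)) *
          ((PowerSeries.mk fun _ => (1 : K)) ^ r * (PowerSeries.mk fun k => q ^ k) ^ s) := by
          rw [g_inv, one_mul]
      _ = _ := by ring
  have h2 := congrArg (PowerSeries.coeff (n+1)) h
  unfold hh
  rw [h2, sub_mul, one_mul, map_sub, mul_assoc, coeff_C_mul, coeff_succ_X_mul]
  ring

lemma hh_zero (r s : ℕ) : hh q r s 0 = 1 := by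
  unfold hh
  rw [coeff_zero_eq_constantCoeff]
  simp

lemma hh_one (r s : ℕ) : hh q r s 1 = r + s * q := by
  induction r with
  | zero =>
    induction s with
    | zero => unfold hh; simp
    | succ s ih => rw [L2, hh_zero, ih]; push_cast; ring
  | succ r ih => rw [L1, ih, hh_zero]; push_cast; ring

lemma rec2A (k n : ℕ) : hh q (k+2) (k+1) (n+2) =
    (1+q) * hh q (k+2) (k+1) (n+1) - q * hh q (k+2) (k+1) n + hh q (k+1) k (n+2) := by
  have h1 : hh q (k+2) (k+1) (n+2) = hh q (k+1) (k+1) (n+2) + hh q (k+2) (k+1) (n+1) := L1 q _ _ _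
  have h2 : hh q (k+1) (k+1) (n+2) = q * hh q (k+1) (k+1) (n+1) + hh q (k+1) k (n+2) := L2 q _ _ _
  have h3 : hh q (k+2) (k+1) (n+1) = hh q (k+1) (k+1) (n+1) + hh q (k+2) (k+1) n := L1 q _ _ _
  have h4 : hh q (k+1) (k+1) (n+1) = hh q (k+2) (k+1) (n+1) - hh q (k+2) (k+1) n := by
    rw [h3]; ring
  rw [h1, h2, h4]; ring

lemma rec2B (k n : ℕ) : hh q (k+1) (k+2) (n+2) =
    (1+q) * hh q (k+1) (k+2) (n+1) - q * hh q (k+1) (k+2) n + hh q k (k+1) (n+2) := by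
  have h1 : hh q (k+1) (k+2) (n+2) = q * hh q (k+1) (k+2) (n+1) + hh q (k+1) (k+1) (n+2) := L2 q _ _ _
  have h2 : hh q (k+1) (k+1) (n+2) = hh q k (k+1) (n+2) + hh q (k+1) (k+1) (n+1) := L1 q _ _ _
  have h3 : hh q (k+1) (k+2) (n+1) = q * hh q (k+1) (k+2) n + hh q (k+1) (k+1) (n+1) := L2 q _ _ _
  have h4 : hh q (k+1) (k+1) (n+1) = hh q (k+1) (k+2) (n+1) - q * hh q (k+1) (k+2) n := by
    rw [h3]; ring
  rw [h1, h2, h4]; ring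

lemma hh10 (n : ℕ) : hh q 1 0 n = 1 := by
  induction n with
  | zero => exact hh_zero q 1 0
  | succ n ih =>
    have := L1 q 0 0 n
    have h00 : hh q 0 0 (n+1) = 0 := by
      unfold hh; simp
    rw [this, h00, ih, zero_add]

lemma hh01 (n : ℕ) : hh q 0 1 n = q ^ n := by
  induction n with
  | zero => rw [hh_zero]; simp
  | succ n ih =>
    have := L2 q 0 0 n
    have h00 : hh q 0 0 (n+1) = 0 := by
      unfold hh; simp
    rw [this, h00, ih, add_zero, pow_succ]; ring

/-- `Gz q m k = g_{m, m-k}` in the notation of the problem. -/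
noncomputable def Gz (q : K) (m k : ℤ) : K :=
  hz q (k+1) k (m - 2*k) + hz q k (k+1) (m - 2*k)

lemma Gz_eq (m : ℤ) (k ν : ℕ) (h : m = 2*k + ν) :
    Gz q m k = hh q (k+1) k ν + hh q k (k+1) ν := by
  have h1 : m - 2*(k:ℤ) = (ν:ℤ) := by omega
  simp only [Gz, h1, hz]
  rw [if_pos, if_pos] <;> simp <;> omega

lemma Gz_zero (m k : ℤ) (h : m < 2*k ∨ k < 0) : Gz q m k = 0 := by
  simp only [Gz, hz]
  rcases h with h | h <;>
    rw [if_neg (by omega), if_neg (by omega), add_zero]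

lemma star (μ k : ℕ) : Gz q ((μ:ℤ)+2) k =
    (1+q) * Gz q ((μ:ℤ)+1) k - q * Gz q (μ:ℤ) k + Gz q (μ:ℤ) ((k:ℤ)-1) := by
  rcases k with _ | κ
  · -- k = 0
    rw [Gz_eq q _ 0 (μ+2) (by push_cast; ring), Gz_eq q _ 0 (μ+1) (by push_cast; ring),
      Gz_eq q _ 0 μ (by push_cast; ring), Gz_zero q _ _ (by right; simp),
      hh10, hh10, hh10, hh01, hh01, hh01]
    rw [pow_succ, pow_succ (n := μ)]
    ring
  · have hc : ((κ+1:ℕ):ℤ) - 1 = (κ:ℤ) := by push_cast; ring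
    rcases Nat.lt_or_ge μ (2*κ) with h | h
    · -- all zero
      rw [hc, Gz_zero q _ _ (by left; push_cast; omega),
        Gz_zero q _ _ (by left; push_cast; omega),
        Gz_zero q _ _ (by left; push_cast; omega),
        Gz_zero q _ _ (by left; push_cast; omega)]
      ring
    · rcases Nat.lt_or_ge μ (2*κ+1) with h2 | h2
      · -- μ = 2κ
        have hμ : μ = 2*κ := by omega
        subst hμ
        rw [hc, Gz_eq q _ (κ+1) 0 (by push_cast; ring),
          Gz_zero q _ _ (by left; push_cast; omega),
          Gz_zero q _ _ (by left; push_cast; omega),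
          Gz_eq q _ κ 0 (by push_cast; ring),
          hh_zero, hh_zero, hh_zero, hh_zero]
        ring
      · rcases Nat.lt_or_ge μ (2*κ+2) with h3 | h3
        · -- μ = 2κ+1
          have hμ : μ = 2*κ+1 := by omega
          subst hμ
          rw [hc, Gz_eq q _ (κ+1) 1 (by push_cast; ring),
            Gz_eq q _ (κ+1) 0 (by push_cast; ring),
            Gz_zero q _ _ (by left; push_cast; omega),
            Gz_eq q _ κ 1 (by push_cast; ring),
            hh_one, hh_one, hh_zero, hh_zero, hh_one, hh_one]
          push_cast
          ring
        · -- μ ≥ 2κ+2, generic case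
          obtain ⟨ν, hν⟩ : ∃ ν : ℕ, μ = 2*(κ+1) + ν := ⟨μ - (2*κ+2), by omega⟩
          subst hν
          rw [hc, Gz_eq q _ (κ+1) (ν+2) (by push_cast; ring),
            Gz_eq q _ (κ+1) (ν+1) (by push_cast; ring),
            Gz_eq q _ (κ+1) ν (by push_cast; ring),
            Gz_eq q _ κ (ν+2) (by push_cast; ring)]
          rw [show κ+1+1 = κ+2 from rfl, rec2A, rec2B]
          ring

lemma core (u : K) : ∀ m : ℕ,
    (u*(1+q*u))^m + (u*(u-1))^m =
      ∑ k ∈ Finset.range (m+1), Gz q (m:ℤ) (k:ℤ) * u^(2*(m-k)) * (1+(q-1)*u)^k := by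
  set Q : K := 1+(q-1)*u with hQ
  have base0 : (u*(1+q*u))^0 + (u*(u-1))^0 =
      ∑ k ∈ Finset.range 1, Gz q (0:ℤ) (k:ℤ) * u^(2*(0-k)) * Q^k := by
    rw [Finset.sum_range_one]
    have g00 := Gz_eq q (0:ℤ) 0 0 (by norm_num)
    push_cast at g00 ⊢
    rw [g00, hh_zero, hh_zero]
    norm_num
  have base1 : (u*(1+q*u))^1 + (u*(u-1))^1 =
      ∑ k ∈ Finset.range 2, Gz q (1:ℤ) (k:ℤ) * u^(2*(1-k)) * Q^k := by
    rw [Finset.sum_range_succ, Finset.sum_range_one]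
    have g10 := Gz_eq q (1:ℤ) 0 1 (by norm_num)
    push_cast at g10 ⊢
    rw [g10, Gz_zero q (1:ℤ) 1 (by norm_num), hh10, hh01]
    push_cast
    ring
  have step : ∀ m : ℕ,
      ((u*(1+q*u))^m + (u*(u-1))^m =
        ∑ k ∈ Finset.range (m+1), Gz q (m:ℤ) (k:ℤ) * u^(2*(m-k)) * Q^k) →
      ((u*(1+q*u))^(m+1) + (u*(u-1))^(m+1) =
        ∑ k ∈ Finset.range (m+2), Gz q ((m:ℤ)+1) (k:ℤ) * u^(2*(m+1-k)) * Q^k) →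
      ((u*(1+q*u))^(m+2) + (u*(u-1))^(m+2) =
        ∑ k ∈ Finset.range (m+3), Gz q ((m:ℤ)+2) (k:ℤ) * u^(2*(m+2-k)) * Q^k) := by
    intro m ih0 ih1
    have newton : (u*(1+q*u))^(m+2) + (u*(u-1))^(m+2)
        = (1+q)*u^2*((u*(1+q*u))^(m+1) + (u*(u-1))^(m+1))
          - q*u^4*((u*(1+q*u))^m + (u*(u-1))^m)
          + u^2*Q*((u*(1+q*u))^m + (u*(u-1))^m) := by
      rw [hQ]; ring
    rw [newton, ih0, ih1]
    -- three sum transformations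
    have hA : (1+q)*u^2*(∑ k ∈ Finset.range (m+2), Gz q ((m:ℤ)+1) (k:ℤ) * u^(2*(m+1-k)) * Q^k)
        = ∑ k ∈ Finset.range (m+3), (1+q) * Gz q ((m:ℤ)+1) (k:ℤ) * u^(2*(m+2-k)) * Q^k := by
      rw [Finset.mul_sum, Finset.sum_range_succ (n := m+2),
        Gz_zero q ((m:ℤ)+1) ((m+2:ℕ):ℤ) (by left; push_cast; omega)]
      simp only [mul_zero, zero_mul, add_zero]
      refine Finset.sum_congr rfl (fun k hk => ?_)
      have hk' : k ≤ m+1 := by simpa [Nat.lt_succ_iff] using hk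
      have he : 2*(m+2-k) = 2 + 2*(m+1-k) := by omega
      rw [he, pow_add]
      ring
    have hB : q*u^4*(∑ k ∈ Finset.range (m+1), Gz q (m:ℤ) (k:ℤ) * u^(2*(m-k)) * Q^k)
        = ∑ k ∈ Finset.range (m+3), q * Gz q (m:ℤ) (k:ℤ) * u^(2*(m+2-k)) * Q^k := by
      rw [Finset.mul_sum, Finset.sum_range_succ (n := m+2), Finset.sum_range_succ (n := m+1),
        Gz_zero q ((m:ℤ)) ((m+2:ℕ):ℤ) (by left; push_cast; omega),
        Gz_zero q ((m:ℤ)) ((m+1:ℕ):ℤ) (by left; push_cast; omega)]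
      simp only [mul_zero, zero_mul, add_zero]
      refine Finset.sum_congr rfl (fun k hk => ?_)
      have hk' : k ≤ m := by simpa [Nat.lt_succ_iff] using hk
      have he : 2*(m+2-k) = 4 + 2*(m-k) := by omega
      rw [he, pow_add]
      ring
    have hC : u^2*Q*(∑ k ∈ Finset.range (m+1), Gz q (m:ℤ) (k:ℤ) * u^(2*(m-k)) * Q^k)
        = ∑ k ∈ Finset.range (m+3), Gz q (m:ℤ) ((k:ℤ)-1) * u^(2*(m+2-k)) * Q^k := by
      rw [Finset.sum_range_succ' (n := m+2)]
      rw [show ((0:ℕ):ℤ)-1 = (-1:ℤ) by norm_num,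
        Gz_zero q (m:ℤ) (-1) (by right; norm_num)]
      simp only [mul_zero, zero_mul, add_zero]
      rw [Finset.sum_range_succ (n := m+1),
        show (((m+1:ℕ)+1:ℕ):ℤ)-1 = ((m+1:ℕ):ℤ) by push_cast; ring,
        Gz_zero q ((m:ℤ)) ((m+1:ℕ):ℤ) (by left; push_cast; omega)]
      simp only [mul_zero, zero_mul, add_zero]
      rw [Finset.mul_sum]
      refine Finset.sum_congr rfl (fun k hk => ?_)
      have hk' : k ≤ m := by simpa [Nat.lt_succ_iff] using hk
      have he : 2*(m+2-(k+1)) = 2 + 2*(m-k) := by omega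
      have hc : ((k+1:ℕ):ℤ)-1 = (k:ℤ) := by push_cast; ring
      rw [he, pow_add, hc, pow_succ]
      ring
    rw [hA, hB, hC, ← Finset.sum_sub_distrib, ← Finset.sum_add_distrib]
    refine (Finset.sum_congr rfl (fun k hk => ?_)).symm
    rw [star q m k]
    ring
  intro m
  induction m using Nat.twoStepInduction with
  | zero => exact base0
  | one => exact base1
  | more n ih1 ih2 =>
    push_cast at ih1 ih2 ⊢
    exact step n ih1 ih2

end XlPowAux

/-- for `m ≥ 1` and `l ≥ 1`,
`X_l^m + X_{l-1}^m = ∑_{k≥0} g_{m,m-k}(q) [l]^{2(m-k)} q^{-l(m-k)}`;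
the sum is finite, over `0 ≤ k ≤ ⌊m/2⌋`. -/
theorem Xl_pow_add {K : Type*} [Field K] (q : K) (hq0 : q ≠ 0) (hq1 : q ≠ 1)
    (m l : ℕ) (hm : 1 ≤ m) (hl : 1 ≤ l) :
    Xl q l ^ m + Xl q (l - 1) ^ m =
      ∑ k ∈ Finset.range (m / 2 + 1),
        gdef q (m : ℤ) ((m : ℤ) - k) * qint q l ^ (2 * (m - k)) * (q ^ (l * (m - k)))⁻¹ := by
  have h1q : (1:K) - q ≠ 0 := sub_ne_zero.2 (Ne.symm hq1)
  set u : K := qint q l with hu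
  have hQ0 : (q:K)^l ≠ 0 := pow_ne_zero _ hq0
  -- q^l = 1 + (q-1)u
  have hQu : q^l = 1 + (q-1)*u := by
    rw [hu, qint]
    field_simp
    ring
  -- qint q (l+1) = 1 + q*u
  have hsucc : qint q (l+1) = 1 + q*u := by
    rw [hu, qint, qint, pow_succ]
    field_simp
    ring
  have hXl : Xl q l = u*(1+q*u) / q^l := by
    rw [Xl, hsucc, hu]
  obtain ⟨j, rfl⟩ : ∃ j, l = j+1 := ⟨l-1, by omega⟩
  have hqj : (q:K)^j ≠ 0 := pow_ne_zero _ hq0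
  have hXl1 : Xl q (j+1-1) = u*(u-1) / q^(j+1) := by
    have hj : qint q j = (u-1)/q := by
      rw [hu, qint, qint, pow_succ]
      field_simp
      ring
    rw [show j+1-1 = j from rfl, Xl, hj, hu, pow_succ]
    field_simp
  rw [hXl, hXl1, div_pow, div_pow, ← add_div]
  rw [XlPowAux.core q u m, ← hQu]
  -- extend RHS range from m/2+1 to m+1
  have hext : ∑ k ∈ Finset.range (m / 2 + 1),
        gdef q (m : ℤ) ((m : ℤ) - k) * u ^ (2 * (m - k)) * (q ^ ((j+1) * (m - k)))⁻¹
      = ∑ k ∈ Finset.range (m + 1),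
        gdef q (m : ℤ) ((m : ℤ) - k) * u ^ (2 * (m - k)) * (q ^ ((j+1) * (m - k)))⁻¹ := by
    refine Finset.sum_subset (by intro x hx; simp at hx ⊢; omega) ?_
    intro k hk hk2
    simp only [Finset.mem_range] at hk hk2
    have hgz : gdef q (m : ℤ) ((m : ℤ) - k) = 0 := by
      rw [gdef, hz, hz, if_neg (by omega), if_neg (by omega), add_zero]
    rw [hgz, zero_mul, zero_mul]
  rw [hext]
  rw [Finset.sum_div]
  refine Finset.sum_congr rfl (fun k hk => ?_)
  have hk' : k ≤ m := by simpa [Nat.lt_succ_iff] using hk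
  have hg : gdef q (m : ℤ) ((m : ℤ) - k) = XlPowAux.Gz q (m:ℤ) (k:ℤ) := by
    rw [gdef, XlPowAux.Gz,
      show (m:ℤ) - ((m:ℤ)-k) + 1 = (k:ℤ)+1 from by ring,
      show (m:ℤ) - ((m:ℤ)-k) = (k:ℤ) from by ring,
      show 2*((m:ℤ)-k) - m = (m:ℤ) - 2*k from by ring]
  rw [hg, pow_mul q (j+1) (m-k)]
  have e : (q^(j+1))^m = (q^(j+1))^k * (q^(j+1))^(m-k) := by rw [← pow_add]; congr 1; omega
  rw [e, ← div_div, mul_div_assoc, div_self (pow_ne_zero k hQ0), mul_one, div_eq_mul_inv]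
end

section
/- The k×k determinant P_{m,k}(q) = det_{0≤i,j≤k-1}( h_{m-k-i+2j-1}({1,q}^{i-j+2}) ) is a palindromic (symmetric) polynomial in q: if P_{m,k}(q) = ∑ a_i q^i has degree d, then a_i = a_{d-i} for all i. -/
/-- The q-Faulhaber coefficient
`P_{m,k}(q) = det_{0≤i,j≤k-1}( h_{m-k-i+2j-1}({1,q}^{i-j+2}) )`, over `ℤ[q]`. -/
noncomputable def Pdet (m k : ℕ) : Polynomial ℤ :=
  Matrix.det (Matrix.of fun i j : Fin k =>
    hz (Polynomial.X : Polynomial ℤ) ((i : ℤ) - j + 2) ((i : ℤ) - j + 2)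
      ((m : ℤ) - k - i + 2 * j - 1))



open Polynomial Finset Matrix

/-- `PalSym d p`: `p` has coefficients vanishing above `d` and mirror-symmetric about `d/2`. -/
def PalSym (d : ℕ) (p : Polynomial ℤ) : Prop :=
  (∀ t, d < t → p.coeff t = 0) ∧ (∀ t, t ≤ d → p.coeff t = p.coeff (d - t))

lemma PalSym.zero (d : ℕ) : PalSym d 0 := by
  constructor <;> intro t ht <;> simp

lemma PalSym.one : PalSym 0 1 := by
  refine ⟨fun t ht => ?_, fun t ht => ?_⟩
  · rw [Polynomial.coeff_one]
    simp only [ite_eq_right_iff]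
    omega
  · interval_cases t; rfl

lemma PalSym.smul (d : ℕ) (z : ℤˣ) (p : Polynomial ℤ) (h : PalSym d p) : PalSym d (z • p) := by
  refine ⟨fun t ht => ?_, fun t ht => ?_⟩
  · rw [Polynomial.coeff_smul, h.1 t ht, smul_zero]
  · rw [Polynomial.coeff_smul, Polynomial.coeff_smul, h.2 t ht]

lemma PalSym.mul {d e : ℕ} {p q : Polynomial ℤ} (hp : PalSym d p) (hq : PalSym e q) :
    PalSym (d + e) (p * q) := by
  have hpr : p = ∑ x ∈ range (d + 1), Polynomial.C (p.coeff x) * X ^ x := by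
    conv_lhs => rw [p.as_sum_range' (d+1) (by
      by_cases h0 : p = 0
      · simp [h0]
      · exact Nat.lt_succ_of_le (Polynomial.natDegree_le_iff_coeff_eq_zero.mpr hp.1))]
    simp only [Polynomial.C_mul_X_pow_eq_monomial]
  have hqr : q = ∑ y ∈ range (e + 1), Polynomial.C (q.coeff y) * X ^ y := by
    conv_lhs => rw [q.as_sum_range' (e+1) (by
      by_cases h0 : q = 0
      · simp [h0]
      · exact Nat.lt_succ_of_le (Polynomial.natDegree_le_iff_coeff_eq_zero.mpr hq.1))]
    simp only [Polynomial.C_mul_X_pow_eq_monomial]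
  have key : ∀ t, (p * q).coeff t =
      ∑ x ∈ range (d + 1), ∑ y ∈ range (e + 1),
        (if x + y = t then p.coeff x * q.coeff y else 0) := by
    intro t
    conv_lhs => rw [hpr, hqr]
    rw [Finset.sum_mul_sum, Polynomial.finset_sum_coeff]
    refine Finset.sum_congr rfl fun x _ => ?_
    rw [Polynomial.finset_sum_coeff]
    refine Finset.sum_congr rfl fun y _ => ?_
    rw [mul_mul_mul_comm, ← Polynomial.C_mul, ← pow_add,
      Polynomial.coeff_C_mul, Polynomial.coeff_X_pow, mul_ite, mul_one, mul_zero]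
    exact if_congr eq_comm rfl rfl
  constructor
  · intro t ht
    rw [key]
    refine Finset.sum_eq_zero fun x hx => Finset.sum_eq_zero fun y hy => ?_
    simp only [mem_range] at hx hy
    have : x + y ≠ t := by omega
    simp [this]
  · intro t ht
    rw [key, key]
    conv_lhs => rw [← Finset.sum_range_reflect]
    refine Finset.sum_congr rfl fun x hx => ?_
    conv_lhs => rw [← Finset.sum_range_reflect]
    refine Finset.sum_congr rfl fun y hy => ?_
    simp only [mem_range] at hx hy
    have h1 : d + 1 - 1 - x = d - x := by omega
    have h2 : e + 1 - 1 - y = e - y := by omega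
    rw [h1, h2, hp.2 _ (by omega), hq.2 _ (by omega)]
    have h3 : d - (d - x) = x := by omega
    have h4 : e - (e - y) = y := by omega
    rw [h3, h4]
    have : (d - x + (e - y) = t) ↔ (x + y = d + e - t) := by omega
    simp only [this]

lemma PalSym.prod {ι : Type*} (s : Finset ι) (f : ι → Polynomial ℤ) (df : ι → ℕ)
    (h : ∀ i ∈ s, PalSym (df i) (f i)) :
    PalSym (∑ i ∈ s, df i) (∏ i ∈ s, f i) := by
  classical
  induction s using Finset.induction with
  | empty => simpa using PalSym.one
  | @insert a s' hni ih =>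
    rw [Finset.prod_insert hni, Finset.sum_insert hni]
    exact (h a (Finset.mem_insert_self a s')).mul (ih fun i hi => h i (Finset.mem_insert_of_mem hi))

lemma PalSym.sum {ι : Type*} (s : Finset ι) (d : ℕ) (f : ι → Polynomial ℤ)
    (h : ∀ i ∈ s, PalSym d (f i)) : PalSym d (∑ i ∈ s, f i) := by
  constructor
  · intro t ht
    rw [Polynomial.finset_sum_coeff]
    exact Finset.sum_eq_zero fun i hi => (h i hi).1 t ht
  · intro t ht
    rw [Polynomial.finset_sum_coeff, Polynomial.finset_sum_coeff]
    exact Finset.sum_congr rfl fun i hi => (h i hi).2 t ht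

lemma PalSym.X_pow (e : ℕ) : PalSym (2 * e) ((X : Polynomial ℤ) ^ e) := by
  constructor
  · intro t ht; rw [Polynomial.coeff_X_pow]; exact if_neg (by omega)
  · intro t ht; rw [Polynomial.coeff_X_pow, Polynomial.coeff_X_pow]
    by_cases h : t = e
    · rw [if_pos h, if_pos (by omega)]
    · rw [if_neg h, if_neg (by omega)]

lemma PalSym.unshift (t d : ℕ) (p : Polynomial ℤ)
    (h : PalSym (2 * t + d) ((X : Polynomial ℤ)^t * p)) :
    PalSym d p := by
  have hc : ∀ s, ((X : Polynomial ℤ)^t * p).coeff (t + s) = p.coeff s := by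
    intro s
    rw [mul_comm, Polynomial.coeff_mul_X_pow']
    simp
  have hlow : ∀ u, u < t → ((X : Polynomial ℤ)^t * p).coeff u = 0 := by
    intro u hu
    rw [mul_comm, Polynomial.coeff_mul_X_pow']
    exact if_neg (by omega)
  constructor
  · intro s hs
    by_cases h2 : 2 * t + d < t + s
    · rw [← hc s]; exact h.1 _ h2
    · rw [← hc s, h.2 (t + s) (by omega)]
      exact hlow _ (by omega)
  · intro s hs
    have := h.2 (t + s) (by omega)
    rw [hc] at this
    rw [show 2 * t + d - (t + s) = t + (d - s) by omega, hc] at this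
    exact this


lemma hockey (r : ℕ) : ∀ n : ℕ, ∑ i ∈ range (n+1), (i+r).choose r = (n+r+1).choose (r+1) := by
  intro n
  induction n with
  | zero => simp
  | succ n ih =>
    rw [Finset.sum_range_succ, ih, show n+1+r = n+r+1 by omega,
      Nat.choose_succ_succ (n+r+1) r]
    simp only [Nat.succ_eq_add_one]
    omega

lemma coeff_mk_one_pow {K : Type*} [CommSemiring K] (r n : ℕ) :
    PowerSeries.coeff n ((PowerSeries.mk fun _ => (1 : K)) ^ (r+1)) = ((n+r).choose r : K) := by
  induction r generalizing n with
  | zero => simp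
  | succ r ih =>
    rw [pow_succ, PowerSeries.coeff_mul]
    have : ∀ p ∈ Finset.HasAntidiagonal.antidiagonal n,
        (PowerSeries.coeff p.1 ((PowerSeries.mk fun _ => (1 : K)) ^ (r+1))) *
        (PowerSeries.coeff p.2 (PowerSeries.mk fun _ => (1 : K))) =
        ((p.1+r).choose r : K) := by
      intro p _
      rw [ih, PowerSeries.coeff_mk, mul_one]
    rw [Finset.sum_congr rfl this, Finset.Nat.sum_antidiagonal_eq_sum_range_succ_mk]
    rw [← Nat.cast_sum, hockey]
    norm_cast

lemma mk_pow_geom {K : Type*} [CommSemiring K] (q : K) :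
    (PowerSeries.mk fun k => q ^ k) = PowerSeries.rescale q (PowerSeries.mk fun _ => (1:K)) := by
  ext n
  rw [PowerSeries.coeff_rescale, PowerSeries.coeff_mk, PowerSeries.coeff_mk, mul_one]

lemma coeff_mk_geom_pow {K : Type*} [CommSemiring K] (q : K) (s n : ℕ) :
    PowerSeries.coeff n ((PowerSeries.mk fun k => q ^ k) ^ (s+1)) =
      ((n+s).choose s : K) * q ^ n := by
  rw [mk_pow_geom, ← map_pow, PowerSeries.coeff_rescale, coeff_mk_one_pow, mul_comm]

lemma hh_closed {K : Type*} [CommSemiring K] (q : K) (r s n : ℕ) :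
    hh q (r+1) (s+1) n =
      ∑ b ∈ range (n+1), (((n-b+r).choose r * (b+s).choose s : ℕ) : K) * q ^ b := by
  unfold hh
  rw [PowerSeries.coeff_mul]
  have : ∀ p ∈ Finset.HasAntidiagonal.antidiagonal n,
      (PowerSeries.coeff p.1 ((PowerSeries.mk fun _ => (1 : K)) ^ (r+1))) *
      (PowerSeries.coeff p.2 ((PowerSeries.mk fun k => q ^ k) ^ (s+1))) =
      (((p.1+r).choose r * (p.2+s).choose s : ℕ) : K) * q ^ p.2 := by
    intro p _
    rw [coeff_mk_one_pow, coeff_mk_geom_pow]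
    push_cast
    ring
  rw [Finset.sum_congr rfl this, Finset.Nat.sum_antidiagonal_eq_sum_range_succ_mk]
  conv_lhs => rw [← Finset.sum_range_reflect]
  refine Finset.sum_congr rfl fun b hb => ?_
  simp only [mem_range] at hb
  have h1 : n + 1 - 1 - b = n - b := by omega
  have h2 : n - (n - b) = b := by omega
  rw [h1, h2]

lemma entry_coeff (r s n t : ℕ) :
    (hh (X : Polynomial ℤ) (r+1) (s+1) n).coeff t =
      if t ≤ n then ((n-t+r).choose r * (t+s).choose s : ℤ) else 0 := by
  rw [hh_closed]
  rw [Polynomial.finset_sum_coeff]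
  have : ∀ b ∈ range (n+1),
      ((((n-b+r).choose r * (b+s).choose s : ℕ) : Polynomial ℤ) * Polynomial.X ^ b).coeff t =
      if b = t then ((n-b+r).choose r * (b+s).choose s : ℤ) else 0 := by
    intro b _
    rw [show (((n-b+r).choose r * (b+s).choose s : ℕ) : Polynomial ℤ) =
      Polynomial.C (((n-b+r).choose r * (b+s).choose s : ℕ) : ℤ) from
        (Polynomial.C_eq_natCast _).symm]
    rw [Polynomial.coeff_C_mul, Polynomial.coeff_X_pow]
    split
    · rename_i h; rw [if_pos h.symm]; push_cast; ring
    · rename_i h; rw [if_neg (fun hh => h hh.symm), mul_zero]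
  rw [Finset.sum_congr rfl this]
  by_cases ht : t ≤ n
  · rw [Finset.sum_ite_eq' (range (n+1)) t]
    rw [if_pos (by simp; omega), if_pos ht]
  · rw [if_neg ht]
    refine Finset.sum_eq_zero fun b hb => ?_
    simp only [mem_range] at hb
    exact if_neg (by omega)

lemma palSym_hh (r n : ℕ) :
    (∀ t, n < t → (hh (X : Polynomial ℤ) (r+1) (r+1) n).coeff t = 0) ∧
    (∀ t, t ≤ n → (hh (X : Polynomial ℤ) (r+1) (r+1) n).coeff t =
      (hh (X : Polynomial ℤ) (r+1) (r+1) n).coeff (n - t)) := by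
  constructor
  · intro t ht; rw [entry_coeff, if_neg (by omega)]
  · intro t ht
    rw [entry_coeff, entry_coeff, if_pos ht, if_pos (by omega)]
    rw [show n - (n - t) = t by omega]
    ring

/-- Ballot number `C(a+2k,k) - C(a+2k,k-1)`. -/
def bb (a k : ℕ) : ℤ :=
  ((a+2*k).choose k : ℤ) - (if k = 0 then 0 else ((a+2*k).choose (k-1) : ℤ))

def qval (c s k : ℕ) : ℤ :=
  ∑ u ∈ range k, (-1:ℤ)^u * (c.choose (s+u) : ℤ) * bb (c+s+u-1) (k-1-u)

lemma ID (n M t : ℕ) (hnM : n ≤ M) :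
    ∑ v ∈ range (t+1), (-1:ℤ)^v * (n.choose v : ℤ) * (((M-v).choose (t-v) : ℕ) : ℤ)
      = ((M-n).choose t : ℤ) := by
  have base : ((Polynomial.X : Polynomial ℤ) + 1) ^ (M-n) =
      ∑ v ∈ range (n+1), Polynomial.C ((-1:ℤ)^v * (n.choose v : ℤ)) *
        (Polynomial.X ^ v * (Polynomial.X + 1) ^ (M-v)) := by
    have h1 : (1 : Polynomial ℤ) =
        ∑ v ∈ range (n+1), (-Polynomial.X)^v * (Polynomial.X+1)^(n-v) *
          (n.choose v : Polynomial ℤ) := by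
      have := add_pow (-Polynomial.X : Polynomial ℤ) (Polynomial.X + 1) n
      rw [show (-Polynomial.X + (Polynomial.X + 1) : Polynomial ℤ) = 1 by ring, one_pow] at this
      exact this
    have h2 : (∑ v ∈ range (n+1), (-Polynomial.X : Polynomial ℤ)^v * (Polynomial.X+1)^(n-v) *
        (n.choose v : Polynomial ℤ)) * (Polynomial.X + 1) ^ (M-n)
        = ((Polynomial.X : Polynomial ℤ) + 1) ^ (M-n) := by
      rw [← h1, one_mul]
    rw [← h2, Finset.sum_mul]
    refine Finset.sum_congr rfl fun v hv => ?_
    simp only [mem_range] at hv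
    rw [show M - v = (n - v) + (M - n) by omega, pow_add, neg_pow]
    simp only [Polynomial.C_mul, Polynomial.C_pow, map_neg, Polynomial.C_1,
      Polynomial.C_eq_natCast]
    push_cast
    ring
  have coeffs := congrArg (fun p => Polynomial.coeff p t) base
  rw [Polynomial.coeff_X_add_one_pow, Polynomial.finset_sum_coeff] at coeffs
  have term : ∀ v ∈ range (n+1),
      (Polynomial.C ((-1:ℤ)^v * (n.choose v : ℤ)) *
        (Polynomial.X ^ v * (Polynomial.X + 1) ^ (M-v))).coeff t =
      (-1:ℤ)^v * (n.choose v : ℤ) *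
        (if v ≤ t then (((M-v).choose (t-v) : ℕ) : ℤ) else 0) := by
    intro v _
    rw [Polynomial.coeff_C_mul, mul_comm (Polynomial.X ^ v),
      Polynomial.coeff_mul_X_pow']
    congr 1
    split
    · rw [Polynomial.coeff_X_add_one_pow]
    · rfl
  rw [Finset.sum_congr rfl term] at coeffs
  set N := max n t with hN
  have e1 : ∑ v ∈ range (n+1), (-1:ℤ)^v * (n.choose v : ℤ) *
      (if v ≤ t then (((M-v).choose (t-v) : ℕ) : ℤ) else 0)
      = ∑ v ∈ range (N+1), (-1:ℤ)^v * (n.choose v : ℤ) *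
      (if v ≤ t then (((M-v).choose (t-v) : ℕ) : ℤ) else 0) := by
    refine Finset.sum_subset (by apply Finset.range_subset_range.mpr; omega) ?_
    intro v hv hvn
    simp only [mem_range] at hv hvn
    rw [Nat.choose_eq_zero_of_lt (by omega)]
    push_cast; ring
  have e2 : ∑ v ∈ range (t+1), (-1:ℤ)^v * (n.choose v : ℤ) * (((M-v).choose (t-v) : ℕ) : ℤ)
      = ∑ v ∈ range (N+1), (-1:ℤ)^v * (n.choose v : ℤ) *
      (if v ≤ t then (((M-v).choose (t-v) : ℕ) : ℤ) else 0) := by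
    rw [show ∑ v ∈ range (t+1), (-1:ℤ)^v * (n.choose v : ℤ) * (((M-v).choose (t-v) : ℕ) : ℤ)
      = ∑ v ∈ range (t+1), (-1:ℤ)^v * (n.choose v : ℤ) *
        (if v ≤ t then (((M-v).choose (t-v) : ℕ) : ℤ) else 0) from
      Finset.sum_congr rfl fun v hv => by
        simp only [mem_range] at hv
        rw [if_pos (by omega)]]
    refine Finset.sum_subset (by apply Finset.range_subset_range.mpr; omega) ?_
    intro v hv hvt
    simp only [mem_range] at hv hvt
    rw [if_neg (by omega)]
    ring
  rw [e2, ← e1]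
  exact coeffs.symm

lemma diamond (a K : ℕ) (hK : 1 ≤ K) :
    ∑ v ∈ range (K+1), (-1:ℤ)^v * ((a+1).choose v : ℤ) * bb (a+v) (K-v) = 0 := by
  unfold bb
  have split : ∑ v ∈ range (K+1), (-1:ℤ)^v * ((a+1).choose v : ℤ) *
      (((a+v+2*(K-v)).choose (K-v) : ℤ) -
        (if K-v = 0 then 0 else ((a+v+2*(K-v)).choose (K-v-1) : ℤ)))
      = (∑ v ∈ range (K+1), (-1:ℤ)^v * ((a+1).choose v : ℤ) * (((a+2*K)-v).choose (K-v) : ℤ))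
      - (∑ v ∈ range K, (-1:ℤ)^v * ((a+1).choose v : ℤ) * (((a+2*K)-v).choose ((K-1)-v) : ℤ)) := by
    have lhs_eq : ∀ v ∈ range (K+1), (-1:ℤ)^v * ((a+1).choose v : ℤ) *
        (((a+v+2*(K-v)).choose (K-v) : ℤ) -
          (if K-v = 0 then 0 else ((a+v+2*(K-v)).choose (K-v-1) : ℤ)))
        = (-1:ℤ)^v * ((a+1).choose v : ℤ) * (((a+2*K)-v).choose (K-v) : ℤ)
          - (-1:ℤ)^v * ((a+1).choose v : ℤ) *
            (if K-v = 0 then 0 else (((a+2*K)-v).choose (K-v-1) : ℤ)) := by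
      intro v hv
      simp only [mem_range] at hv
      rw [show a+v+2*(K-v) = (a+2*K)-v by omega]
      ring
    rw [Finset.sum_congr rfl lhs_eq, Finset.sum_sub_distrib]
    congr 1
    rw [Finset.sum_range_succ, if_pos (by omega), mul_zero, add_zero]
    refine Finset.sum_congr rfl fun v hv => ?_
    simp only [mem_range] at hv
    rw [if_neg (by omega), show K-v-1 = K-1-v by omega]
  have e3 := ID (a+1) (a+2*K) (K-1) (by omega)
  rw [show (K-1)+1 = K by omega] at e3
  rw [split, ID (a+1) (a+2*K) K (by omega), e3,
    show (a+2*K)-(a+1) = 2*K-1 by omega,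
    show K-1 = 2*K-1-K by omega, Nat.choose_symm (by omega)]
  ring

lemma qval_rec (c s k : ℕ) :
    qval c s (k+1) = (c.choose s : ℤ) * bb (c+s-1) k - qval c (s+1) k := by
  unfold qval
  rw [Finset.sum_range_succ']
  have h1 : (∑ i ∈ range k, (-1:ℤ)^(i+1) * (c.choose (s+(i+1)) : ℤ) *
      bb (c+s+(i+1)-1) (k+1-1-(i+1)))
      = - ∑ u ∈ range k, (-1:ℤ)^u * (c.choose (s+1+u) : ℤ) * bb (c+(s+1)+u-1) (k-1-u) := by
    rw [← Finset.sum_neg_distrib]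
    refine Finset.sum_congr rfl fun i hi => ?_
    rw [show s+(i+1) = s+1+i by omega, show c+s+(i+1)-1 = c+(s+1)+i-1 by omega,
      show k+1-1-(i+1) = k-1-i by omega, pow_succ]
    ring
  rw [h1, show s+0 = s by omega, show c+s+0-1 = c+s-1 by omega, show k+1-1-0 = k by omega]
  ring

lemma bb_rec (a k : ℕ) (hk : 1 ≤ k) :
    bb a (k+1) = (a+1 : ℤ) * bb (a+1) k - qval (a+1) 2 k := by
  have h := diamond a (k+1) (by omega)
  rw [Finset.sum_range_succ', Finset.sum_range_succ'] at h
  have h2 : (∑ i ∈ range k, (-1:ℤ)^(i+1+1) * ((a+1).choose (i+1+1) : ℤ) *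
      bb (a+(i+1+1)) (k+1-(i+1+1))) = qval (a+1) 2 k := by
    unfold qval
    refine Finset.sum_congr rfl fun i hi => ?_
    rw [show i+1+1 = 2+i by omega, show a+(2+i) = (a+1)+2+i-1 by omega,
      show k+1-(2+i) = k-1-i by omega, show (2:ℕ)+i = i+2 by omega, pow_add]
    norm_num
  rw [h2] at h
  simp only [zero_add, add_zero, Nat.sub_zero, pow_one, pow_zero, one_mul,
    Nat.choose_one_right, Nat.choose_zero_right, Nat.cast_one, Nat.add_sub_cancel] at h
  push_cast at h
  linarith [h]

lemma bb_pos (a k : ℕ) : 0 < bb a k := by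
  unfold bb
  rcases Nat.eq_zero_or_pos k with hk | hk
  · subst hk; simp
  · rw [if_neg (by omega)]
    have key : (a+2*k).choose (k-1) < (a+2*k).choose k := by
      have h1 := Nat.choose_succ_right_eq (a+2*k) (k-1)
      rw [show (k-1)+1 = k by omega] at h1
      have h2 : (a+2*k) - (k-1) = a+k+1 := by omega
      rw [h2] at h1
      have hpos : 0 < (a+2*k).choose (k-1) := Nat.choose_pos (by omega)
      nlinarith [h1, hpos]
    have : ((a+2*k).choose (k-1) : ℤ) < ((a+2*k).choose k : ℤ) := by exact_mod_cast key
    omega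


lemma chcast (x1 y1 x2 y2 : ℕ) (hx : x1 = x2) (hy : y1 = y2) :
    ((x1.choose y1 : ℕ) : ℤ) = ((x2.choose y2 : ℕ) : ℤ) := by subst hx; subst hy; rfl

def Bent (a i j : ℕ) : ℤ := if j ≤ i+1 then ((a+j+1).choose (i+1-j) : ℤ) else 0

def Qent (c s i j : ℕ) : ℤ :=
  if j = 0 then (c.choose (i+s) : ℤ)
  else if j ≤ i+1 then ((c+s+j-1).choose (i+1-j) : ℤ) else 0

def Bmat (a k : ℕ) : Matrix (Fin k) (Fin k) ℤ := Matrix.of fun i j => Bent a i j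
def Qmat (c s k : ℕ) : Matrix (Fin k) (Fin k) ℤ := Matrix.of fun i j => Qent c s i j

lemma succAbove_one_val (n : ℕ) (j : Fin (n+1)) :
    (((1 : Fin (n+2)).succAbove j) : ℕ) = if (j:ℕ) = 0 then 0 else (j:ℕ)+1 := by
  by_cases h : (j:ℕ) = 0
  · rw [if_pos h, Fin.succAbove_of_castSucc_lt]
    · simp [h]
    · rw [Fin.lt_def]
      simp [h]
  · rw [if_neg h, Fin.succAbove_of_le_castSucc]
    · simp
    · rw [Fin.le_def]
      simp
      omega

/-- Expansion: two-term Laplace along first row for a matrix whose first row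
vanishes beyond column 1. -/
lemma det_two_term (n : ℕ) (A : Matrix (Fin (n+2)) (Fin (n+2)) ℤ)
    (hrow : ∀ j : Fin (n+2), 2 ≤ (j:ℕ) → A 0 j = 0) :
    A.det = A 0 0 * (A.submatrix Fin.succ Fin.succ).det
      - A 0 1 * (A.submatrix Fin.succ ((1 : Fin (n+2)).succAbove)).det := by
  rw [Matrix.det_succ_row_zero]
  have hvan : ∀ x ∈ (Finset.univ : Finset (Fin (n+2))), x ∉ ({0, 1} : Finset (Fin (n+2))) →
      (-1:ℤ)^(x:ℕ) * A 0 x * (A.submatrix Fin.succ x.succAbove).det = 0 := by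
    intro x _ hx
    simp only [Finset.mem_insert, Finset.mem_singleton] at hx
    push_neg at hx
    have h2 : 2 ≤ (x:ℕ) := by
      rcases hx with ⟨h0, h1⟩
      have : (x:ℕ) ≠ 0 := fun h => h0 (by ext; simp [h])
      have : (x:ℕ) ≠ 1 := fun h => h1 (by ext; simp [h])
      omega
    rw [hrow x h2, mul_zero, zero_mul]
  rw [← Finset.sum_subset (Finset.subset_univ ({0,1} : Finset (Fin (n+2)))) hvan]
  rw [Finset.sum_insert (by simp), Finset.sum_singleton]
  rw [Fin.succAbove_zero]
  simp [Fin.val_zero, Fin.val_one]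
  ring

lemma Bdet_rec (a n : ℕ) :
    (Bmat a (n+2)).det = (a+1:ℤ) * (Bmat (a+1) (n+1)).det - (Qmat (a+1) 2 (n+1)).det := by
  rw [det_two_term n (Bmat a (n+2)) (by
    intro j hj
    show Bent a 0 (j:ℕ) = 0
    rw [Bent, if_neg (by omega)])]
  have h00 : Bmat a (n+2) 0 0 = (a+1 : ℤ) := by
    show Bent a 0 0 = (a+1:ℤ)
    rw [Bent, if_pos (by omega)]
    simp [Nat.choose_one_right]
  have h01 : Bmat a (n+2) 0 1 = 1 := by
    show Bent a ((0:Fin (n+2)):ℕ) ((1:Fin (n+2)):ℕ) = 1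
    rw [Fin.val_zero, Fin.val_one, Bent, if_pos (by omega)]
    simp
  have hm0 : (Bmat a (n+2)).submatrix Fin.succ Fin.succ = Bmat (a+1) (n+1) := by
    ext i j
    show Bent a ((i.succ : Fin (n+2)):ℕ) ((j.succ : Fin (n+2)):ℕ) = Bent (a+1) (i:ℕ) (j:ℕ)
    rw [Fin.val_succ, Fin.val_succ, Bent, Bent]
    by_cases h : (j:ℕ) ≤ (i:ℕ)+1
    · rw [if_pos (by omega), if_pos h]
      exact chcast _ _ _ _ (by omega) (by omega)
    · rw [if_neg (by omega), if_neg h]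
  have hm1 : (Bmat a (n+2)).submatrix Fin.succ ((1 : Fin (n+2)).succAbove)
      = Qmat (a+1) 2 (n+1) := by
    ext i j
    show Bent a ((i.succ : Fin (n+2)):ℕ) (((1 : Fin (n+2)).succAbove j : Fin (n+2)):ℕ)
      = Qent (a+1) 2 (i:ℕ) (j:ℕ)
    rw [Fin.val_succ, succAbove_one_val]
    by_cases h : (j:ℕ) = 0
    · rw [if_pos h, h, Bent, Qent, if_pos rfl, if_pos (by omega)]
      exact chcast _ _ _ _ (by omega) (by omega)
    · rw [if_neg h, Bent, Qent, if_neg h]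
      by_cases h2 : (j:ℕ) ≤ (i:ℕ)+1
      · rw [if_pos (by omega), if_pos h2]
        exact chcast _ _ _ _ (by omega) (by omega)
      · rw [if_neg (by omega), if_neg h2]
  rw [h00, h01, hm0, hm1, one_mul]

lemma Qdet_rec (c s n : ℕ) (hcs : 1 ≤ c + s) :
    (Qmat c s (n+2)).det = (c.choose s : ℤ) * (Bmat (c+s-1) (n+1)).det
      - (Qmat c (s+1) (n+1)).det := by
  rw [det_two_term n (Qmat c s (n+2)) (by
    intro j hj
    show Qent c s 0 (j:ℕ) = 0
    rw [Qent, if_neg (by omega), if_neg (by omega)])]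
  have h00 : Qmat c s (n+2) 0 0 = (c.choose s : ℤ) := by
    show Qent c s 0 0 = (c.choose s : ℤ)
    rw [Qent, if_pos rfl]
    simp
  have h01 : Qmat c s (n+2) 0 1 = 1 := by
    show Qent c s ((0:Fin (n+2)):ℕ) ((1:Fin (n+2)):ℕ) = 1
    rw [Fin.val_zero, Fin.val_one, Qent, if_neg (by omega), if_pos (by omega)]
    rw [show c+s+1-1 = c+s by omega, show 0+1-1 = 0 by omega]
    simp
  have hm0 : (Qmat c s (n+2)).submatrix Fin.succ Fin.succ = Bmat (c+s-1) (n+1) := by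
    ext i j
    show Qent c s ((i.succ : Fin (n+2)):ℕ) ((j.succ : Fin (n+2)):ℕ) = Bent (c+s-1) (i:ℕ) (j:ℕ)
    rw [Fin.val_succ, Fin.val_succ, Qent, Bent, if_neg (by omega)]
    by_cases h : (j:ℕ) ≤ (i:ℕ)+1
    · rw [if_pos (by omega), if_pos h]
      exact chcast _ _ _ _ (by omega) (by omega)
    · rw [if_neg (by omega), if_neg h]
  have hm1 : (Qmat c s (n+2)).submatrix Fin.succ ((1 : Fin (n+2)).succAbove)
      = Qmat c (s+1) (n+1) := by
    ext i j
    show Qent c s ((i.succ : Fin (n+2)):ℕ) (((1 : Fin (n+2)).succAbove j : Fin (n+2)):ℕ)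
      = Qent c (s+1) (i:ℕ) (j:ℕ)
    rw [Fin.val_succ, succAbove_one_val]
    by_cases h : (j:ℕ) = 0
    · rw [if_pos h, h, Qent, Qent, if_pos rfl, if_pos rfl]
      exact chcast _ _ _ _ (by omega) (by omega)
    · rw [if_neg h, Qent, Qent, if_neg (show ¬((j:ℕ)+1 = 0) by omega), if_neg h]
      by_cases h2 : (j:ℕ) ≤ (i:ℕ)+1
      · rw [if_pos (by omega), if_pos h2]
        exact chcast _ _ _ _ (by omega) (by omega)
      · rw [if_neg (by omega), if_neg h2]
  rw [h00, h01, hm0, hm1, one_mul]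

lemma det_one_Bmat (a : ℕ) : (Bmat a 1).det = bb a 1 := by
  rw [Matrix.det_fin_one]
  show Bent a 0 0 = bb a 1
  rw [Bent, if_pos (by omega), bb, if_neg (by omega)]
  simp [Nat.choose_one_right]
  push_cast
  omega

lemma det_one_Qmat (c s : ℕ) : (Qmat c s 1).det = qval c s 1 := by
  rw [Matrix.det_fin_one]
  show Qent c s 0 0 = qval c s 1
  rw [Qent, if_pos rfl, qval]
  rw [Finset.sum_range_one]
  rw [show c+s+0-1 = c+s-1 by omega, show 1-1-0 = 0 by omega, bb]
  simp

theorem detvals : ∀ k : ℕ, (∀ a, (Bmat a (k+1)).det = bb a (k+1)) ∧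
    (∀ c s, 1 ≤ c → (Qmat c s (k+1)).det = qval c s (k+1)) := by
  intro k
  induction k with
  | zero => exact ⟨fun a => det_one_Bmat a, fun c s _ => det_one_Qmat c s⟩
  | succ k ih =>
    constructor
    · intro a
      rw [Bdet_rec a k, ih.1 (a+1), ih.2 (a+1) 2 (by omega), ← bb_rec a (k+1) (by omega)]
    · intro c s hc
      rw [Qdet_rec c s k (by omega), ih.1 (c+s-1), ih.2 c (s+1) hc, ← qval_rec c s (k+1)]

-- GLUE
lemma hh_zero_s12 {K : Type*} [CommSemiring K] (q : K) (t : ℕ) :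
    hh q 0 0 t = if t = 0 then 1 else 0 := by
  unfold hh
  simp [PowerSeries.coeff_one]

section Glue

variable (m k : ℕ)

/-- Entry of the Pdet matrix. -/
noncomputable def Ent (i j : Fin k) : Polynomial ℤ :=
  hz (Polynomial.X : Polynomial ℤ) ((i : ℤ) - j + 2) ((i : ℤ) - j + 2)
    ((m : ℤ) - k - i + 2 * j - 1)

lemma Pdet_eq : Pdet m k = (Matrix.of (Ent m k)).det := rfl

lemma pal_entry (hk : k < m) (i j : Fin k) :
    PalSym ((m - k - 1) + 2*(j:ℕ) + (i:ℕ))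
      ((Polynomial.X : Polynomial ℤ)^(i:ℕ) * Ent m k i j) := by
  set a := m - k - 1 with ha
  have hiv : ((i : Fin k) : ℤ) = ((i:ℕ) : ℤ) := rfl
  have hjv : ((j : Fin k) : ℤ) = ((j:ℕ) : ℤ) := rfl
  have hka : (a : ℤ) = (m:ℤ) - k - 1 := by
    have : k + 1 ≤ m := hk
    push_cast [ha]
    omega
  by_cases h1 : (j:ℕ) ≤ (i:ℕ) + 1
  · by_cases h2 : (i:ℕ) ≤ a + 2*(j:ℕ)
    · -- valid entry
      rw [Ent, hz, if_pos (by rw [hiv, hjv]; omega)]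
      have hr : ((i : ℤ) - j + 2).toNat = ((i:ℕ)+1-(j:ℕ)) + 1 := by
        rw [hiv, hjv]; omega
      have hn : ((m : ℤ) - k - i + 2*j - 1).toNat = a + 2*(j:ℕ) - (i:ℕ) := by
        rw [hiv, hjv]
        omega
      rw [hr, hn]
      have hpal := palSym_hh ((i:ℕ)+1-(j:ℕ)) (a + 2*(j:ℕ) - (i:ℕ))
      have := (PalSym.X_pow (i:ℕ)).mul (p := (Polynomial.X : Polynomial ℤ)^(i:ℕ))
        (q := hh (Polynomial.X : Polynomial ℤ) (((i:ℕ)+1-(j:ℕ))+1) (((i:ℕ)+1-(j:ℕ))+1)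
          (a + 2*(j:ℕ) - (i:ℕ))) ⟨hpal.1, hpal.2⟩
      rwa [show 2*(i:ℕ) + (a + 2*(j:ℕ) - (i:ℕ)) = a + 2*(j:ℕ) + (i:ℕ) by omega] at this
    · -- n < 0 : entry zero
      rw [Ent, hz, if_neg (by rw [hiv, hjv]; push_neg; intro _ _; omega), mul_zero]
      exact PalSym.zero _
  · by_cases h3 : (j:ℕ) = (i:ℕ) + 2
    · -- r = 0, n > 0 : entry is coeff of 1, zero
      rw [Ent, hz, if_pos (by rw [hiv, hjv]; omega)]
      have hr : ((i : ℤ) - j + 2).toNat = 0 := by rw [hiv, hjv]; omega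
      have hn : 1 ≤ ((m : ℤ) - k - i + 2*j - 1).toNat := by
        rw [hiv, hjv]; omega
      rw [hr, hh_zero_s12, if_neg (by omega), mul_zero]
      exact PalSym.zero _
    · -- r < 0 : entry zero
      rw [Ent, hz, if_neg (by rw [hiv, hjv]; push_neg; intro h; omega), mul_zero]
      exact PalSym.zero _

lemma cc_entry (hk : k < m) (i j : Fin k) :
    Polynomial.constantCoeff (Ent m k i j) = Bent (m - k - 1) (i:ℕ) (j:ℕ) := by
  set a := m - k - 1 with ha
  have hiv : ((i : Fin k) : ℤ) = ((i:ℕ) : ℤ) := rfl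
  have hjv : ((j : Fin k) : ℤ) = ((j:ℕ) : ℤ) := rfl
  have hka : k + 1 ≤ m := hk
  rw [Polynomial.constantCoeff_apply]
  by_cases h1 : (j:ℕ) ≤ (i:ℕ) + 1
  · by_cases h2 : (i:ℕ) ≤ a + 2*(j:ℕ)
    · rw [Ent, hz, if_pos (by rw [hiv, hjv]; omega)]
      have hr : ((i : ℤ) - j + 2).toNat = ((i:ℕ)+1-(j:ℕ)) + 1 := by rw [hiv, hjv]; omega
      have hn : ((m : ℤ) - k - i + 2*j - 1).toNat = a + 2*(j:ℕ) - (i:ℕ) := by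
        rw [hiv, hjv]; omega
      rw [hr, hn, entry_coeff, if_pos (by omega), Bent, if_pos h1]
      rw [show 0 + ((i:ℕ)+1-(j:ℕ)) = (i:ℕ)+1-(j:ℕ) by omega, Nat.choose_self]
      rw [chcast (a + 2*(j:ℕ) - (i:ℕ) - 0 + ((i:ℕ)+1-(j:ℕ))) ((i:ℕ)+1-(j:ℕ))
        (a+(j:ℕ)+1) ((i:ℕ)+1-(j:ℕ)) (by omega) rfl]
      simp
    · rw [Ent, hz, if_neg (by rw [hiv, hjv]; push_neg; intro _ _; omega)]
      rw [Bent, if_pos h1, Nat.choose_eq_zero_of_lt (by omega)]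
      simp
  · by_cases h3 : (j:ℕ) = (i:ℕ) + 2
    · rw [Ent, hz, if_pos (by rw [hiv, hjv]; omega)]
      have hr : ((i : ℤ) - j + 2).toNat = 0 := by rw [hiv, hjv]; omega
      have hn : 1 ≤ ((m : ℤ) - k - i + 2*j - 1).toNat := by rw [hiv, hjv]; omega
      rw [hr, hh_zero_s12, if_neg (by omega), Bent, if_neg (by omega)]
      simp
    · rw [Ent, hz, if_neg (by rw [hiv, hjv]; push_neg; intro h; omega)]
      rw [Bent, if_neg (by omega)]
      simp

lemma palSym_Pdet (hk : k < m) :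
    PalSym (∑ i : Fin k, ((m - k - 1) + (i:ℕ))) (Pdet m k) := by
  set a := m - k - 1 with ha
  set T := ∑ i : Fin k, (i:ℕ) with hT
  set D := ∑ i : Fin k, (a + (i:ℕ)) with hD
  have step3 : PalSym (2*T + D)
      ((Matrix.of (fun i j : Fin k =>
        (Polynomial.X : Polynomial ℤ)^(i:ℕ) * Ent m k i j)).det) := by
    rw [Matrix.det_apply]
    apply PalSym.sum
    intro σ _
    apply PalSym.smul
    have hterm := PalSym.prod Finset.univ
      (fun i : Fin k => (Polynomial.X : Polynomial ℤ)^((σ i : Fin k):ℕ) * Ent m k (σ i) i)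
      (fun i : Fin k => a + 2*(i:ℕ) + ((σ i : Fin k):ℕ))
      (fun i _ => pal_entry m k hk (σ i) i)
    have hsum : (∑ i : Fin k, (a + 2*(i:ℕ) + ((σ i : Fin k):ℕ))) = 2*T + D := by
      rw [Finset.sum_add_distrib, Equiv.sum_comp σ (fun i : Fin k => (i:ℕ))]
      rw [show (fun i : Fin k => a + 2*(i:ℕ)) = fun i : Fin k => (a + (i:ℕ)) + (i:ℕ)
        from funext fun i => by omega]
      rw [Finset.sum_add_distrib, ← hD, ← hT]
      omega
    rw [hsum] at hterm
    convert hterm using 2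
    rfl
  have step4 : (Matrix.of (fun i j : Fin k =>
      (Polynomial.X : Polynomial ℤ)^(i:ℕ) * Ent m k i j)).det
      = (Polynomial.X : Polynomial ℤ)^T * Pdet m k := by
    rw [show (Matrix.of (fun i j : Fin k =>
        (Polynomial.X : Polynomial ℤ)^(i:ℕ) * Ent m k i j))
      = Matrix.of (fun i j : Fin k =>
        (fun i : Fin k => (Polynomial.X : Polynomial ℤ)^(i:ℕ)) i *
          (Matrix.of (Ent m k)) i j) from rfl]
    rw [Matrix.det_mul_column, Finset.prod_pow_eq_pow_sum, ← hT, Pdet_eq]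
  rw [step4] at step3
  exact PalSym.unshift T D _ step3

lemma cc_Pdet (hk : k < m) :
    (Pdet m k).coeff 0 = (Bmat (m - k - 1) k).det := by
  rw [← Polynomial.constantCoeff_apply, Pdet_eq, RingHom.map_det]
  congr 1
  ext i j
  exact cc_entry m k hk i j

lemma cc_Pdet_ne_zero (hk : k < m) : (Pdet m k).coeff 0 ≠ 0 := by
  rw [cc_Pdet m k hk]
  rcases Nat.eq_zero_or_pos k with h0 | h0
  · subst h0
    rw [Matrix.det_fin_zero]
    norm_num
  · obtain ⟨k', rfl⟩ : ∃ k', k = k'+1 := ⟨k-1, by omega⟩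
    rw [(detvals k').1 (m-(k'+1)-1)]
    have := bb_pos (m-(k'+1)-1) (k'+1)
    omega

end Glue

/-- `P_{m,k}(q)` is palindromic: if `d` is its degree then the
coefficients satisfy `a_i = a_{d-i}`. -/
theorem Pdet_coeff_symmetric (m k : ℕ) (hk : k < m) (i : ℕ)
    (hi : i ≤ (Pdet m k).natDegree) :
    (Pdet m k).coeff i = (Pdet m k).coeff ((Pdet m k).natDegree - i) := by
  have hpal := palSym_Pdet m k hk
  have hcc := cc_Pdet_ne_zero m k hk
  set D := ∑ i : Fin k, ((m - k - 1) + (i:ℕ)) with hD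
  have hle : (Pdet m k).natDegree ≤ D := Polynomial.natDegree_le_iff_coeff_eq_zero.mpr hpal.1
  have hcoD : (Pdet m k).coeff D = (Pdet m k).coeff 0 := by
    have := hpal.2 D le_rfl
    rwa [Nat.sub_self] at this
  have hge : D ≤ (Pdet m k).natDegree :=
    Polynomial.le_natDegree_of_ne_zero (by rw [hcoD]; exact hcc)
  have hdeg : (Pdet m k).natDegree = D := le_antisymm hle hge
  rw [hdeg]
  exact hpal.2 i (by omega)
end

section
/- The (m+1)×(m+1) lower triangular matrix A with entries A_{k,m'} = h_{2m'-k}({1,q}^{k-m'+1}) (indices 0 ≤ k, m' ≤ n) and the matrix B with entries B_{k,m'} = (-1)^{k-m'} ([m']!_q/[k+1]!_q) P_{k,k-m'}(q) are inverse to each other, where P_{m,j}(q) = det_{0≤i,l≤j-1}( h_{m-j-i+2l-1}({1,q}^{i-l+2}) ) and P_{m,0}(q) = 1. -/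
/-- The q-factorial `[k]! = [1][2]⋯[k]`. -/
noncomputable def qfac {K : Type*} [Field K] (q : K) (k : ℕ) : K :=
  ∏ i ∈ Finset.range k, qint q (i + 1)

/-- `P_{m,k}(q) = det_{0≤i,j≤k-1}( h_{m-k-i+2j-1}({1,q}^{i-j+2}) )`; `P_{m,0} = 1`. -/
noncomputable def PdetF {K : Type*} [Field K] (q : K) (m k : ℕ) : K :=
  Matrix.det (Matrix.of fun i j : Fin k =>
    hz q ((i : ℤ) - j + 2) ((i : ℤ) - j + 2) ((m : ℤ) - k - i + 2 * j - 1))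


open Matrix Finset

variable {K : Type*} [Field K]

/-- nat version of succAbove -/
def nsA (l b : ℕ) : ℕ := if b < l then b else b + 1

lemma coe_succAbove {n : ℕ} (l : Fin (n+1)) (b : Fin n) :
    (l.succAbove b : ℕ) = nsA l b := by
  rw [Fin.succAbove, nsA]
  split
  · simp_all [Fin.lt_def]
  · rename_i h
    rw [if_neg (by simpa [Fin.lt_def] using h)]
    rfl

/-- `Dp f d j` = det of the d×d block with entries `f (j+1+a) (j+b)`. -/
noncomputable def Dp (f : ℕ → ℕ → K) (d j : ℕ) : K :=
  Matrix.det (Matrix.of fun a b : Fin d => f (j + 1 + a) (j + b))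

lemma Dp_zero (f : ℕ → ℕ → K) (j : ℕ) : Dp f 0 j = 1 := Matrix.det_fin_zero

lemma minor_det (f : ℕ → ℕ → K) (hf : ∀ k m', k < m' → f k m' = 0) (j : ℕ) :
    ∀ e l, l ≤ e →
      Matrix.det (Matrix.of fun a b : Fin e => f (j + 1 + a) (j + nsA l b)) =
        Dp f l j * ∏ c ∈ Finset.Ico (j + l + 1) (j + e + 1), f c c := by
  intro e
  induction e with
  | zero => intro l hl; interval_cases l; simp [Dp_zero]
  | succ e ih =>
    intro l hl
    rcases eq_or_lt_of_le hl with h | h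
    · subst h
      have : (Matrix.of fun a b : Fin (e+1) => f (j + 1 + a) (j + nsA (e+1) b)) =
          (Matrix.of fun a b : Fin (e+1) => f (j + 1 + a) (j + b)) := by
        ext a b
        simp only [Matrix.of_apply, nsA, if_pos (b.isLt)]
      rw [this]
      simp [Dp]
    · have hle : l ≤ e := by omega
      rw [Matrix.det_succ_column _ (Fin.last e)]
      rw [Fintype.sum_eq_single (Fin.last e)]
      · have hcol : nsA l e = e + 1 := by unfold nsA; rw [if_neg (by omega)]
        simp only [Matrix.of_apply, Fin.val_last, Fin.succAbove_last, hcol]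
        have hsub : ((Matrix.of fun a b : Fin (e+1) => f (j + 1 + a) (j + nsA l b)).submatrix
            (Fin.castSucc (n := e)) Fin.castSucc) =
            (Matrix.of fun a b : Fin e => f (j + 1 + a) (j + nsA l b)) := by
          ext a b
          simp
        rw [hsub, ih l hle]
        have hd : f (j + 1 + e) (j + (e+1)) = f (j + e + 1) (j + e + 1) := by ring_nf
        rw [hd]
        have hP : ∏ c ∈ Finset.Ico (j+l+1) (j+(e+1)+1), f c c =
            (∏ c ∈ Finset.Ico (j+l+1) (j+e+1), f c c) * f (j+e+1) (j+e+1) := by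
          have h2 : j+(e+1)+1 = (j+e+1)+1 := by ring
          rw [h2, Finset.prod_Ico_succ_top (by omega)]
        rw [hP]
        have hsgn : ((-1:K))^(e*2) = 1 := by rw [pow_mul']; norm_num
        ring_nf
        rw [hsgn]
        ring
      · intro a ha
        have haval : (a : ℕ) < e := by
          rcases Fin.lt_or_lt_of_ne ha with h' | h'
          · simpa [Fin.lt_def] using h'
          · exfalso; have := a.isLt; have : (a:ℕ) ≤ e := by omega
            have h2 : (Fin.last e : Fin (e+1)) < a := h'
            rw [Fin.lt_def] at h2; simp at h2; omega
        have hns : nsA l e = e + 1 := by unfold nsA; rw [if_neg (by omega)]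
        have hzz : f (j + 1 + a) (j + nsA l e) = 0 := hf _ _ (by omega)
        simp [hzz]

lemma laplace (f : ℕ → ℕ → K) (hf : ∀ k m', k < m' → f k m' = 0) (j e : ℕ) :
    Dp f (e+1) j = ∑ l ∈ Finset.range (e+1),
      (-1 : K)^(e-l) * f (j+e+1) (j+l) * Dp f l j *
        ∏ c ∈ Finset.Ico (j+l+1) (j+e+1), f c c := by
  rw [Dp, Matrix.det_succ_row _ (Fin.last e)]
  rw [← Fin.sum_univ_eq_sum_range (fun l => (-1 : K)^(e-l) * f (j+e+1) (j+l) * Dp f l j *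
        ∏ c ∈ Finset.Ico (j+l+1) (j+e+1), f c c) (e+1)]
  apply Finset.sum_congr rfl
  intro l _
  have hsub : ((Matrix.of fun a b : Fin (e+1) => f (j + 1 + a) (j + b)).submatrix
      (Fin.last e).succAbove l.succAbove) =
      (Matrix.of fun a b : Fin e => f (j + 1 + a) (j + nsA l b)) := by
    ext a b
    simp [Fin.succAbove_last, coe_succAbove]
  rw [hsub, minor_det f hf j e l (by omega)]
  have hsign : ((-1 : K))^((Fin.last e : ℕ) + (l:ℕ)) = (-1 : K)^(e - (l:ℕ)) := by
    simp only [Fin.val_last]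
    have h1 : e + (l:ℕ) = e - (l:ℕ) + 2 * (l:ℕ) := by omega
    rw [h1, pow_add, pow_mul]
    simp
  rw [hsign]
  simp only [Matrix.of_apply, Fin.val_last]
  have : j + 1 + e = j + e + 1 := by ring
  rw [this]
  ring

noncomputable def gEnt (f : ℕ → ℕ → K) (k j : ℕ) : K :=
  if j ≤ k then (-1 : K)^(k-j) * Dp f (k-j) j / ∏ c ∈ Finset.Icc j k, f c c else 0

lemma neg_one_pow_split (l e : ℕ) (h : l ≤ e) :
    ((-1 : K))^l = (-1 : K)^e * (-1 : K)^(e-l) := by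
  rw [← pow_add]
  have h2 : e + (e - l) = l + 2*(e-l) := by omega
  rw [h2, pow_add, pow_mul]
  norm_num

lemma key0 (f : ℕ → ℕ → K) (hf : ∀ k m', k < m' → f k m' = 0) (j e : ℕ) :
    ∑ l ∈ Finset.range (e+2),
      (-1:K)^l * f (j+e+1) (j+l) * Dp f l j * ∏ c ∈ Finset.Ico (j+l+1) (j+e+2), f c c = 0 := by
  rw [Finset.sum_range_succ]
  have hIcoE : Finset.Ico (j+(e+1)+1) (j+e+2) = (∅ : Finset ℕ) := by
    apply Finset.Ico_eq_empty; omega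
  have hsum : ∑ l ∈ Finset.range (e+1),
      (-1:K)^l * f (j+e+1) (j+l) * Dp f l j * ∏ c ∈ Finset.Ico (j+l+1) (j+e+2), f c c
      = (-1:K)^e * f (j+e+1) (j+e+1) * Dp f (e+1) j := by
    have hcong : ∀ l ∈ Finset.range (e+1),
        (-1:K)^l * f (j+e+1) (j+l) * Dp f l j * ∏ c ∈ Finset.Ico (j+l+1) (j+e+2), f c c
        = (-1:K)^e * f (j+e+1) (j+e+1) *
            ((-1:K)^(e-l) * f (j+e+1) (j+l) * Dp f l j *
              ∏ c ∈ Finset.Ico (j+l+1) (j+e+1), f c c) := by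
      intro l hl
      rw [Finset.mem_range] at hl
      have hP : ∏ c ∈ Finset.Ico (j+l+1) (j+e+2), f c c =
          (∏ c ∈ Finset.Ico (j+l+1) (j+e+1), f c c) * f (j+e+1) (j+e+1) := by
        have h2 : j+e+2 = (j+e+1)+1 := by ring
        rw [h2, Finset.prod_Ico_succ_top (by omega)]
      rw [hP, neg_one_pow_split l e (by omega)]
      ring
    rw [Finset.sum_congr rfl hcong, ← Finset.mul_sum, ← laplace f hf j e]
  rw [hsum, hIcoE]
  have h3 : j + (e+1) = j + e + 1 := by ring
  rw [h3]
  simp [pow_succ]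

lemma prod_Icc_ne_zero (f : ℕ → ℕ → K) (hd : ∀ c, f c c ≠ 0) (a b : ℕ) :
    ∏ c ∈ Finset.Icc a b, f c c ≠ 0 :=
  Finset.prod_ne_zero_iff.2 fun c _ => hd c

lemma sum_f_g (f : ℕ → ℕ → K) (hf : ∀ k m', k < m' → f k m' = 0)
    (hd : ∀ c, f c c ≠ 0) (k j : ℕ) :
    ∑ m' ∈ Finset.Icc j k, f k m' * gEnt f m' j = (if k = j then (1:K) else 0) := by
  rcases lt_trichotomy k j with h | rfl | h
  · rw [Finset.Icc_eq_empty (by omega), if_neg (by omega)]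
    simp
  · rw [if_pos rfl, Finset.Icc_self, Finset.sum_singleton, gEnt, if_pos le_rfl]
    simp only [Nat.sub_self, Dp_zero, Finset.Icc_self, Finset.prod_singleton]
    field_simp
    exact div_self (hd k)
  · rw [if_neg (by omega)]
    obtain ⟨e, rfl⟩ : ∃ e, k = j + e + 1 := ⟨k - j - 1, by omega⟩
    have hIcc : ∀ m : ℕ, Finset.Icc j m = Finset.Ico j (m+1) := fun m => by
      rw [Finset.Ico_add_one_right_eq_Icc]
    have hsplit : ∀ l, l ≤ e + 1 →
        ∏ c ∈ Finset.Icc j (j+e+1), f c c =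
          (∏ c ∈ Finset.Icc j (j+l), f c c) * ∏ c ∈ Finset.Ico (j+l+1) (j+e+2), f c c := by
      intro l hl
      rw [hIcc, hIcc]
      rw [← Finset.prod_Ico_consecutive (fun c => f c c) (by omega : j ≤ j+l+1)
        (by omega : j+l+1 ≤ j+e+1+1)]
    have hterm : ∀ m' ∈ Finset.Icc j (j+e+1),
        f (j+e+1) m' * gEnt f m' j =
          ((-1:K)^(m'-j) * f (j+e+1) m' * Dp f (m'-j) j *
            ∏ c ∈ Finset.Ico (m'+1) (j+e+2), f c c) / ∏ c ∈ Finset.Icc j (j+e+1), f c c := by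
      intro m' hm'
      rw [Finset.mem_Icc] at hm'
      obtain ⟨l, rfl⟩ : ∃ l, m' = j + l := ⟨m' - j, by omega⟩
      have hl : l ≤ e + 1 := by omega
      rw [gEnt, if_pos (by omega)]
      have hlj : j + l - j = l := by omega
      rw [hlj, hsplit l hl]
      have h1 : ∏ c ∈ Finset.Icc j (j+l), f c c ≠ 0 := prod_Icc_ne_zero f hd _ _
      have h2 : ∏ c ∈ Finset.Ico (j+l+1) (j+e+2), f c c ≠ 0 := by
        rw [← Finset.Ico_add_one_right_eq_Icc] at *
        exact fun h0 => absurd (Finset.prod_eq_zero_iff.1 h0) (by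
          push_neg; intro c _; exact hd c)
      field_simp
    rw [Finset.sum_congr rfl hterm, ← Finset.sum_div]
    have hnum : ∑ m' ∈ Finset.Icc j (j+e+1),
        ((-1:K)^(m'-j) * f (j+e+1) m' * Dp f (m'-j) j *
          ∏ c ∈ Finset.Ico (m'+1) (j+e+2), f c c) = 0 := by
      rw [← key0 f hf j e, hIcc, Finset.sum_Ico_eq_sum_range]
      have h5 : j + e + 1 + 1 - j = e + 2 := by omega
      rw [h5]
      apply Finset.sum_congr rfl
      intro l _
      have h6 : j + l - j = l := by omega
      rw [h6]
    rw [hnum, zero_div]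

lemma tri_inv (f : ℕ → ℕ → K) (hf : ∀ k m', k < m' → f k m' = 0)
    (hd : ∀ c, f c c ≠ 0) (N : ℕ) :
    (Matrix.of fun k j : Fin (N+1) => f k j) * (Matrix.of fun k j : Fin (N+1) => gEnt f k j)
      = 1 := by
  ext k j
  rw [Matrix.mul_apply]
  simp only [Matrix.of_apply]
  have h1 : ∑ m' : Fin (N+1), f k m' * gEnt f (m' : ℕ) j
      = ∑ m ∈ Finset.range (N+1), f k m * gEnt f m j :=
    Fin.sum_univ_eq_sum_range (fun m => f k m * gEnt f m j) (N+1)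
  rw [h1]
  have hsub : Finset.Icc (j:ℕ) (k:ℕ) ⊆ Finset.range (N+1) := by
    intro x hx
    rw [Finset.mem_Icc] at hx
    rw [Finset.mem_range]
    have := k.isLt
    omega
  rw [← Finset.sum_subset hsub]
  · rw [sum_f_g f hf hd k j, Matrix.one_apply]
    by_cases hkj : k = j
    · rw [if_pos hkj, if_pos (by rw [hkj])]
    · rw [if_neg hkj, if_neg (fun hv => hkj (Fin.ext hv))]
  · intro x _ hx
    rw [Finset.mem_Icc] at hx
    push_neg at hx
    by_cases hxj : (j : ℕ) ≤ x
    · rw [hf k x (hx hxj), zero_mul]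
    · rw [gEnt, if_neg hxj, mul_zero]

section Specialize

variable {K : Type*} [Field K]

/-- The entry function of the matrix `A`. -/
noncomputable def fA (q : K) (k m' : ℕ) : K :=
  hz q ((k:ℤ) - (m':ℤ) + 1) ((k:ℤ) - (m':ℤ) + 1) (2*(m':ℤ) - (k:ℤ))

lemma hh_one_one (q : K) (n : ℕ) : hh q 1 1 n = ∑ i ∈ Finset.range (n+1), q^i := by
  unfold hh
  rw [pow_one, pow_one, PowerSeries.coeff_mul,
    Finset.Nat.sum_antidiagonal_eq_sum_range_succ_mk]
  simp only [PowerSeries.coeff_mk, one_mul]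
  rw [← Finset.sum_range_reflect (fun i => q^i) (n+1)]
  apply Finset.sum_congr rfl
  intro i hi
  rw [Finset.mem_range] at hi
  congr 1

lemma fA_diag (q : K) (hq : q ≠ 1) (c : ℕ) : fA q c c = qint q (c+1) := by
  unfold fA hz
  rw [if_pos (by constructor <;> [omega; constructor <;> omega])]
  have h1 : ((c:ℤ) - (c:ℤ) + 1).toNat = 1 := by omega
  have h2 : (2*(c:ℤ) - (c:ℤ)).toNat = c := by omega
  have hq' : (1:K) - q ≠ 0 := sub_ne_zero.2 (Ne.symm hq)
  have hq'' : q - (1:K) ≠ 0 := sub_ne_zero.2 hq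
  rw [h1, h2, hh_one_one, qint, geom_sum_eq hq, div_eq_div_iff hq'' hq']
  ring

lemma hh_zero_zero (q : K) (n : ℕ) (hn : n ≠ 0) : hh q 0 0 n = 0 := by
  unfold hh
  rw [pow_zero, pow_zero, one_mul, PowerSeries.coeff_one, if_neg hn]

lemma fA_above (q : K) (k m' : ℕ) (h : k < m') : fA q k m' = 0 := by
  unfold fA hz
  rcases eq_or_lt_of_le (by omega : k + 1 ≤ m') with h1 | h1
  · have e1 : ((k:ℤ) - (m':ℤ) + 1).toNat = 0 := by omega
    have e2 : (2*(m':ℤ) - (k:ℤ)).toNat = k + 2 := by omega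
    rw [if_pos (by omega), e1, e2, hh_zero_zero q (k+2) (by omega)]
  · rw [if_neg (by omega)]

lemma PdetF_eq_Dp (q : K) (k m' : ℕ) (h : m' ≤ k) :
    PdetF q k (k - m') = Dp (fA q) (k - m') m' := by
  unfold PdetF Dp
  congr 1
  ext i j
  simp only [Matrix.of_apply]
  unfold fA
  congr 1 <;> push_cast [Nat.cast_sub h] <;> ring

lemma qfac_split (q : K) (k m' : ℕ) (h : m' ≤ k) :
    qfac q (k+1) = qfac q m' * ∏ c ∈ Finset.Icc m' k, qint q (c+1) := by
  unfold qfac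
  rw [Finset.range_eq_Ico,
    ← Finset.prod_Ico_consecutive (fun i => qint q (i+1)) (by omega : 0 ≤ m')
      (by omega : m' ≤ k+1), ← Finset.Ico_add_one_right_eq_Icc, ← Finset.range_eq_Ico]

lemma gEnt_eq_B (q : K) (hq : q ≠ 1) (hqz : ∀ c : ℕ, qint q (c+1) ≠ 0) (k m' : ℕ) :
    (if m' ≤ k then
        (-1 : K) ^ (k - m') * qfac q m' / qfac q (k + 1) * PdetF q k (k - m')
      else 0) = gEnt (fA q) k m' := by
  unfold gEnt
  by_cases h : m' ≤ k
  · rw [if_pos h, if_pos h, PdetF_eq_Dp q k m' h]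
    have hprod : ∏ c ∈ Finset.Icc m' k, fA q c c = ∏ c ∈ Finset.Icc m' k, qint q (c+1) :=
      Finset.prod_congr rfl fun c _ => fA_diag q hq c
    rw [hprod, qfac_split q k m' h]
    have h1 : qfac q m' ≠ 0 := by
      unfold qfac
      exact Finset.prod_ne_zero_iff.2 fun i _ => hqz i
    have h2 : ∏ c ∈ Finset.Icc m' k, qint q (c+1) ≠ 0 :=
      Finset.prod_ne_zero_iff.2 fun c _ => hqz c
    field_simp
  · rw [if_neg h, if_neg h]

end Specialize

lemma ratfunc_X_pow_ne_one (n : ℕ) : (RatFunc.X : RatFunc ℚ)^(n+1) ≠ 1 := by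
  intro h
  have h2 : (Polynomial.X : Polynomial ℚ)^(n+1) = 1 := by
    apply RatFunc.algebraMap_injective ℚ
    rw [map_pow, _root_.map_one, RatFunc.algebraMap_X]
    exact h
  have := congrArg (fun p => Polynomial.coeff p 0) h2
  simp [Polynomial.coeff_X_pow] at this

lemma ratfunc_X_ne_one : (RatFunc.X : RatFunc ℚ) ≠ 1 := by
  have := ratfunc_X_pow_ne_one 0
  simpa using this

lemma qint_X_ne_zero (c : ℕ) : qint (RatFunc.X : RatFunc ℚ) (c+1) ≠ 0 := by
  unfold qint
  apply div_ne_zero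
  · intro h
    apply ratfunc_X_pow_ne_one c
    have : (RatFunc.X : RatFunc ℚ)^(c+1) = 1 := by linear_combination -h
    exact this
  · intro h
    apply ratfunc_X_ne_one
    linear_combination -h

/-- over `ℚ(q)`, the lower triangular matrices
`A_{k,m'} = h_{2m'-k}({1,q}^{k-m'+1})` and
`B_{k,m'} = (-1)^{k-m'} ([m']!/[k+1]!) P_{k,k-m'}(q)` (zero above the diagonal)
are inverse to each other. -/
theorem faulhaber_matrices_inverse (n : ℕ) :
    let q : RatFunc ℚ := RatFunc.X
    let A : Matrix (Fin (n + 1)) (Fin (n + 1)) (RatFunc ℚ) :=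
      Matrix.of fun k m' =>
        hz q (((k : ℕ) : ℤ) - (m' : ℕ) + 1) (((k : ℕ) : ℤ) - (m' : ℕ) + 1)
          (2 * ((m' : ℕ) : ℤ) - (k : ℕ))
    let B : Matrix (Fin (n + 1)) (Fin (n + 1)) (RatFunc ℚ) :=
      Matrix.of fun k m' =>
        if (m' : ℕ) ≤ (k : ℕ) then
          (-1 : RatFunc ℚ) ^ ((k : ℕ) - (m' : ℕ)) * qfac q (m' : ℕ) / qfac q ((k : ℕ) + 1) *
            PdetF q (k : ℕ) ((k : ℕ) - (m' : ℕ))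
        else 0
    A * B = 1 ∧ B * A = 1 := by
  intro q A B
  have hq1 : q ≠ 1 := ratfunc_X_ne_one
  have hqz : ∀ c : ℕ, qint q (c+1) ≠ 0 := qint_X_ne_zero
  have hf : ∀ k m', k < m' → fA q k m' = 0 := fA_above q
  have hd : ∀ c, fA q c c ≠ 0 := fun c => by
    rw [fA_diag q hq1 c]; exact hqz c
  have hA : A = Matrix.of (fun k j : Fin (n+1) => fA q (k : ℕ) (j : ℕ)) := rfl
  have hB : B = Matrix.of (fun k j : Fin (n+1) => gEnt (fA q) (k : ℕ) (j : ℕ)) := by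
    ext k j
    simp only [Matrix.of_apply]
    exact gEnt_eq_B q hq1 hqz (k : ℕ) (j : ℕ)
  have h1 : A * B = 1 := by
    rw [hA, hB]
    exact tri_inv (fA q) hf hd n
  exact ⟨h1, mul_eq_one_comm.1 h1⟩
end
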